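/- arXiv:1609.03004 — 8 statements merged into one kernel-verified Lean document; each statement's English description precedes it below -/
import Mathlib

section
/- Let X be a nonnegative random variable and g(x) = -log P(X > x). For d ≥ 0 and m ≥ 0 define L_{m,d} = {ℓ ∈ [0,2m] : g(ℓ) + g(2m-ℓ) ≤ 2(g(m)+d)}. If X, Y are i.i.d. with this law, then P(X+Y > 2m) ≥ e^{-2d} · |L_{m,d}|_g · P(X > m)², where |·|_g denotes the Lebesgue–Stieltjes measure associated to g. -/
open MeasureTheory ProbabilityTheory Filter

section Auxiliary

open Set Real Topology Metric
open scoped ENNReal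

private lemma exp_layer' (c : ℝ) :
    ∫⁻ u in Ioi c, ENNReal.ofReal (Real.exp (-u)) = ENNReal.ofReal (Real.exp (-c)) := by
  rw [← integral_exp_neg_Ioi c, ofReal_integral_eq_lintegral_ofReal]
  · simpa [IntegrableOn] using exp_neg_integrableOn_Ioi c one_pos
  · exact Filter.Eventually.of_forall (fun u => (Real.exp_pos _).le)

private lemma slice_bound' (g : StieltjesFunction ℝ) (a b u : ℝ) :
    g.measure (Ioc a b ∩ {t | g t < u}) ≤ ENNReal.ofReal (min (g b - g a) (u - g a)) := by
  set S := Ioc a b ∩ {t | g t < u} with hS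
  rcases S.eq_empty_or_nonempty with h | h
  · simp [h]
  · have hbdd : BddAbove S := (bddAbove_Ioc).mono (inter_subset_left)
    set c := sSup S with hc
    obtain ⟨s, hs⟩ := h
    have hsc : s ≤ c := le_csSup hbdd hs
    have hac : a < c := lt_of_lt_of_le hs.1.1 hsc
    have hcb : c ≤ b := csSup_le ⟨s, hs⟩ (fun t ht => ht.1.2)
    by_cases hgc : g c < u
    · have hsub : S ⊆ Ioc a c := fun t ht => ⟨ht.1.1, le_csSup hbdd ht⟩
      calc g.measure S ≤ g.measure (Ioc a c) := measure_mono hsub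
        _ = ENNReal.ofReal (g c - g a) := g.measure_Ioc a c
        _ ≤ _ := by
            apply ENNReal.ofReal_le_ofReal
            exact le_min (by have := g.mono hcb; linarith) (by linarith)
    · have hsub : S ⊆ Ioo a c := by
        intro t ht
        refine ⟨ht.1.1, lt_of_le_of_ne (le_csSup hbdd ht) ?_⟩
        rintro rfl; exact hgc ht.2
      have hll : Function.leftLim g c ≤ u := by
        apply le_of_tendsto (g.mono.tendsto_leftLim c)
        filter_upwards [Ioo_mem_nhdsLT_of_mem ⟨hac, le_refl c⟩] with t ht
        obtain ⟨s', hs', hts'⟩ := exists_lt_of_lt_csSup ⟨s, hs⟩ ht.2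
        exact (g.mono hts'.le).trans hs'.2.le
      have hll2 : Function.leftLim g c ≤ g b := (g.mono.leftLim_le (le_refl c)).trans (g.mono hcb)
      calc g.measure S ≤ g.measure (Ioo a c) := measure_mono hsub
        _ = ENNReal.ofReal (Function.leftLim g c - g a) := g.measure_Ioo
        _ ≤ _ := by
            apply ENNReal.ofReal_le_ofReal
            exact le_min (by linarith) (by linarith)

private lemma calc_bound' (A B : ℝ) (hAB : A ≤ B) :
    ∫⁻ u, ENNReal.ofReal (Real.exp (-u)) * ENNReal.ofReal (min (B - A) (u - A))
      ≤ ENNReal.ofReal (Real.exp (-A) - Real.exp (-B)) := by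
  set f : ℝ → ℝ≥0∞ := fun u => ENNReal.ofReal (Real.exp (-u)) * ENNReal.ofReal (min (B - A) (u - A)) with hf
  have heq : f = (Ioi A).indicator f := by
    funext u
    by_cases hu : u ∈ Ioi A
    · rw [indicator_of_mem hu]
    · rw [indicator_of_notMem hu]
      simp only [mem_Ioi, not_lt] at hu
      have : min (B - A) (u - A) ≤ 0 := le_trans (min_le_right _ _) (by linarith)
      rw [hf]; dsimp only; rw [ENNReal.ofReal_eq_zero.2 this, mul_zero]
  rw [heq, lintegral_indicator measurableSet_Ioi]
  have hsplit : Ioi A = Ioc A B ∪ Ioi B := (Ioc_union_Ioi_eq_Ioi hAB).symm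
  rw [hsplit, lintegral_union measurableSet_Ioi Ioc_disjoint_Ioi_same]
  have h1 : ∫⁻ u in Ioc A B, f u = ENNReal.ofReal (Real.exp (-A) - Real.exp (-B) * (B - A + 1)) := by
    have : ∫⁻ u in Ioc A B, f u = ∫⁻ u in Ioc A B, ENNReal.ofReal (Real.exp (-u) * (u - A)) := by
      apply setLIntegral_congr_fun measurableSet_Ioc
      intro u hu
      rw [hf]; dsimp only
      rw [min_eq_right (by linarith [hu.2] : u - A ≤ B - A),
        ENNReal.ofReal_mul (Real.exp_pos _).le]
    rw [this, ← ofReal_integral_eq_lintegral_ofReal]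
    · congr 1
      have hint : ∫ u in Ioc A B, Real.exp (-u) * (u - A) = ∫ u in A..B, Real.exp (-u) * (u - A) := by
        rw [intervalIntegral.integral_of_le hAB]
      rw [hint]
      have hderiv : ∀ u ∈ uIcc A B,
          HasDerivAt (fun u => -(Real.exp (-u) * (u - A + 1))) (Real.exp (-u) * (u - A)) u := by
        intro u _
        have h1 : HasDerivAt (fun u : ℝ => Real.exp (-u)) (-Real.exp (-u)) u := by
          simpa using (hasDerivAt_neg u).exp
        have h2 : HasDerivAt (fun u : ℝ => u - A + 1) 1 u := by
          simpa using ((hasDerivAt_id u).sub_const A).add_const 1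
        have : HasDerivAt (fun u => -(Real.exp (-u) * (u - A + 1)))
            (-(-Real.exp (-u) * (u - A + 1) + Real.exp (-u) * 1)) u := (h1.mul h2).neg
        convert this using 1
        ring
      rw [intervalIntegral.integral_eq_sub_of_hasDerivAt hderiv]
      · ring_nf
      · apply Continuous.intervalIntegrable
        exact (Real.continuous_exp.comp continuous_neg).mul (continuous_id.sub continuous_const)
    · exact ((Real.continuous_exp.comp continuous_neg).mul
        (continuous_id.sub continuous_const)).integrableOn_Ioc
    · apply (ae_restrict_iff' measurableSet_Ioc).2
      apply Filter.Eventually.of_forall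
      intro u hu
      simp only [Pi.zero_apply]
      have := (Real.exp_pos (-u)).le
      nlinarith [hu.1.le]
  have h2 : ∫⁻ u in Ioi B, f u = ENNReal.ofReal (Real.exp (-B) * (B - A)) := by
    have : ∫⁻ u in Ioi B, f u = ∫⁻ u in Ioi B, ENNReal.ofReal (Real.exp (-u)) * ENNReal.ofReal (B - A) := by
      apply setLIntegral_congr_fun measurableSet_Ioi
      intro u hu
      rw [hf]; dsimp only
      rw [min_eq_left (by linarith [mem_Ioi.1 hu] : B - A ≤ u - A)]
    rw [this, lintegral_mul_const' _ _ (by simp), exp_layer', ← ENNReal.ofReal_mul (Real.exp_pos _).le]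
  rw [h1, h2, ← ENNReal.ofReal_add]
  · apply ENNReal.ofReal_le_ofReal; apply le_of_eq; ring
  · have h3 : Real.exp (-B) * (B - A + 1) ≤ Real.exp (-A) := by
      have := Real.add_one_le_exp (B - A)
      calc Real.exp (-B) * (B - A + 1) ≤ Real.exp (-B) * Real.exp (B - A) :=
        mul_le_mul_of_nonneg_left this (Real.exp_pos _).le
      _ = Real.exp (-A) := by rw [← Real.exp_add]; ring_nf
    linarith
  · exact mul_nonneg (Real.exp_pos _).le (by linarith)

private lemma interval_bound' (g : StieltjesFunction ℝ) (a b : ℝ) (hab : a ≤ b) :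
    ∫⁻ t in Ioc a b, ENNReal.ofReal (Real.exp (-(g t))) ∂g.measure
      ≤ ENNReal.ofReal (Real.exp (-(g a)) - Real.exp (-(g b))) := by
  have hmg : Measurable g := g.mono.measurable
  have hsF : MeasurableSet {q : ℝ × ℝ | g q.1 < q.2} :=
    measurableSet_lt (hmg.comp measurable_fst) measurable_snd
  set F : ℝ → ℝ → ℝ≥0∞ :=
    fun t u => {q : ℝ × ℝ | g q.1 < q.2}.indicator (fun q => ENNReal.ofReal (Real.exp (-q.2))) (t, u)
    with hF
  have hFm : AEMeasurable (Function.uncurry F)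
      ((g.measure.restrict (Ioc a b)).prod volume) := by
    have : Function.uncurry F =
        {q : ℝ × ℝ | g q.1 < q.2}.indicator (fun q => ENNReal.ofReal (Real.exp (-q.2))) := by
      funext p
      rw [hF]
      rfl
    rw [this]
    exact ((ENNReal.measurable_ofReal.comp
      (Real.measurable_exp.comp measurable_snd.neg)).indicator hsF).aemeasurable
  have step1 : ∀ t : ℝ, ENNReal.ofReal (Real.exp (-(g t))) = ∫⁻ u, F t u := by
    intro t
    have h1 : ∀ u : ℝ, F t u = (Ioi (g t)).indicator (fun u => ENNReal.ofReal (Real.exp (-u))) u := by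
      intro u
      by_cases h : g t < u <;>
        simp [hF, Set.indicator_apply, h, mem_Ioi]
    simp_rw [h1]
    rw [lintegral_indicator measurableSet_Ioi, exp_layer']
  calc ∫⁻ t in Ioc a b, ENNReal.ofReal (Real.exp (-(g t))) ∂g.measure
      = ∫⁻ t in Ioc a b, (∫⁻ u, F t u) ∂g.measure := lintegral_congr (fun t => step1 t)
    _ = ∫⁻ u, ∫⁻ t in Ioc a b, F t u ∂g.measure := lintegral_lintegral_swap hFm
    _ ≤ ∫⁻ u, ENNReal.ofReal (Real.exp (-u)) * ENNReal.ofReal (min (g b - g a) (u - g a)) := by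
        apply lintegral_mono
        intro u
        have hsu : MeasurableSet {t : ℝ | g t < u} := hmg measurableSet_Iio
        have hinner : ∀ t : ℝ, F t u =
            ({t : ℝ | g t < u}).indicator (fun _ => ENNReal.ofReal (Real.exp (-u))) t := by
          intro t
          by_cases h : g t < u <;> simp [hF, Set.indicator_apply, h]
        simp_rw [hinner]
        rw [lintegral_indicator hsu, setLIntegral_const,
          Measure.restrict_apply hsu]
        refine mul_le_mul_right ?_ _
        rw [inter_comm]
        exact slice_bound' g a b u
    _ ≤ _ := calc_bound' (g a) (g b) (g.mono hab)

private lemma mu_Ioc' (g : StieltjesFunction ℝ) (μ : Measure ℝ) [IsFiniteMeasure μ]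
    (hμ : ∀ x, μ (Ioi x) = ENNReal.ofReal (Real.exp (-(g x)))) (a b : ℝ) (hab : a ≤ b) :
    μ (Ioc a b) = ENNReal.ofReal (Real.exp (-(g a)) - Real.exp (-(g b))) := by
  rw [← Ioi_diff_Ioi, measure_diff (Ioi_subset_Ioi hab) measurableSet_Ioi.nullMeasurableSet
    (measure_ne_top μ _), hμ, hμ, ← ENNReal.ofReal_sub _ (Real.exp_pos _).le]

private lemma icc_bound' (g : StieltjesFunction ℝ) (μ : Measure ℝ) [IsFiniteMeasure μ]
    (hμ : ∀ x, μ (Ioi x) = ENNReal.ofReal (Real.exp (-(g x)))) (c b : ℝ) :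
    ∫⁻ t in Icc c b, ENNReal.ofReal (Real.exp (-(g t))) ∂g.measure ≤ μ (Icc c b) := by
  rcases le_or_gt c b with hcb | hcb
  · set s : ℕ → Set ℝ := fun n => Ioc (c - 1 / (n + 1)) b with hs
    have hanti : Antitone s := by
      intro i j hij
      apply Ioc_subset_Ioc_left
      have : (1 : ℝ) / (j + 1) ≤ 1 / (i + 1) := by
        apply one_div_le_one_div_of_le (by positivity)
        exact_mod_cast by omega
      linarith
    have hiInter : ⋂ n, s n = Icc c b := by
      ext x
      simp only [mem_iInter, hs, mem_Ioc, mem_Icc]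
      constructor
      · intro h
        refine ⟨?_, (h 0).2⟩
        by_contra hx
        push_neg at hx
        obtain ⟨n, hn⟩ := exists_nat_one_div_lt (by linarith : 0 < c - x)
        have := (h n).1
        linarith
      · intro h n
        constructor
        · have : (0:ℝ) < 1 / (n + 1) := by positivity
          linarith [h.1]
        · exact h.2
    have htend : Tendsto (μ ∘ s) atTop (𝓝 (μ (Icc c b))) := by
      rw [← hiInter]
      exact tendsto_measure_iInter_atTop
        (fun n => measurableSet_Ioc.nullMeasurableSet) hanti ⟨0, measure_ne_top μ _⟩
    apply ge_of_tendsto htend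
    apply Filter.Eventually.of_forall
    intro n
    have h1 : ∫⁻ t in Icc c b, ENNReal.ofReal (Real.exp (-(g t))) ∂g.measure
        ≤ ∫⁻ t in s n, ENNReal.ofReal (Real.exp (-(g t))) ∂g.measure := by
      apply lintegral_mono_set
      intro x hx
      constructor
      · have : (0:ℝ) < 1 / (n + 1) := by positivity
        linarith [hx.1]
      · exact hx.2
    refine h1.trans ?_
    have hab' : c - 1 / (n + 1) ≤ b := by
      have : (0:ℝ) < 1 / (n + 1) := by positivity
      linarith
    refine (interval_bound' g _ b hab').trans ?_
    rw [← mu_Ioc' g μ hμ _ b hab']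
    exact le_rfl
  · rw [Icc_eq_empty (not_le.2 hcb)]
    simp

private lemma ae_ball_pos' (ν : Measure ℝ) :
    ∀ᵐ x ∂ν, ∀ r : ℝ, 0 < r → ν (Metric.closedBall x r) ≠ 0 := by
  set T := {x : ℝ | ∃ r : ℝ, 0 < r ∧ ν (Metric.closedBall x r) = 0} with hTdef
  have hTU : T ⊆ ⋃ p ∈ {p : ℚ × ℚ | ν (Metric.ball (p.1 : ℝ) (p.2 : ℝ)) = 0},
      Metric.ball (p.1 : ℝ) (p.2 : ℝ) := by
    rintro x ⟨r, hr, hx⟩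
    obtain ⟨q, hq1, hq2⟩ := exists_rat_btwn (by linarith : x - r/4 < x + r/4)
    obtain ⟨s, hs1, hs2⟩ := exists_rat_btwn (by linarith : (r:ℝ)/4 < r/2)
    have hxq : |x - (q:ℝ)| < r/4 := abs_lt.2 ⟨by linarith, by linarith⟩
    have hball : Metric.ball (q:ℝ) (s:ℝ) ⊆ Metric.closedBall x r := by
      intro y hy
      rw [Metric.mem_ball, Real.dist_eq] at hy
      rw [Metric.mem_closedBall, Real.dist_eq]
      have : |y - x| ≤ |y - (q:ℝ)| + |(q:ℝ) - x| := abs_sub_le _ _ _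
      rw [abs_sub_comm (q:ℝ) x] at this
      linarith
    have hnull : ν (Metric.ball (q:ℝ) (s:ℝ)) = 0 :=
      measure_mono_null hball hx
    apply mem_biUnion (show (q, s) ∈ {p : ℚ × ℚ | ν (Metric.ball (p.1:ℝ) (p.2:ℝ)) = 0} from hnull)
    rw [Metric.mem_ball, Real.dist_eq]
    linarith
  have hU : ν (⋃ p ∈ {p : ℚ × ℚ | ν (Metric.ball (p.1 : ℝ) (p.2 : ℝ)) = 0},
      Metric.ball (p.1 : ℝ) (p.2 : ℝ)) = 0 :=
    (measure_biUnion_null_iff (Set.to_countable _)).2 (fun p hp => hp)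
  have hT : ν T = 0 := measure_mono_null hTU hU
  rw [ae_iff]
  apply measure_mono_null _ hT
  intro x hx
  simp only [mem_setOf_eq] at hx
  push_neg at hx
  obtain ⟨r, hr, hx⟩ := hx
  exact ⟨r, hr, hx⟩

private lemma nu_le_mu' (g : StieltjesFunction ℝ) (μ : Measure ℝ) [IsFiniteMeasure μ]
    (hμ : ∀ x, μ (Ioi x) = ENNReal.ofReal (Real.exp (-(g x)))) :
    g.measure.withDensity (fun t => ENNReal.ofReal (Real.exp (-(g t)))) ≤ μ := by
  set ν := g.measure.withDensity (fun t => ENNReal.ofReal (Real.exp (-(g t)))) with hν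
  have hν_apply : ∀ s : Set ℝ, MeasurableSet s →
      ν s = ∫⁻ t in s, ENNReal.ofReal (Real.exp (-(g t))) ∂g.measure :=
    fun s hs => withDensity_apply _ hs
  haveI hloc : IsLocallyFiniteMeasure ν := by
    constructor
    intro x
    refine ⟨Ioo (x - 1) (x + 1), Ioo_mem_nhds (by linarith) (by linarith), ?_⟩
    rw [hν_apply _ measurableSet_Ioo]
    calc ∫⁻ t in Ioo (x-1) (x+1), ENNReal.ofReal (Real.exp (-(g t))) ∂g.measure
        ≤ ∫⁻ _ in Ioo (x-1) (x+1), ENNReal.ofReal (Real.exp (-(g (x-1)))) ∂g.measure := by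
          apply setLIntegral_mono' measurableSet_Ioo
          intro t ht
          exact ENNReal.ofReal_le_ofReal
            (Real.exp_le_exp.2 (neg_le_neg (g.mono ht.1.le)))
      _ = ENNReal.ofReal (Real.exp (-(g (x-1)))) * g.measure (Ioo (x-1) (x+1)) :=
          setLIntegral_const _ _
      _ < ∞ := by
          apply ENNReal.mul_lt_top ENNReal.ofReal_lt_top
          exact lt_of_le_of_lt (measure_mono Ioo_subset_Ioc_self)
            (by rw [g.measure_Ioc]; exact ENNReal.ofReal_lt_top)
  have hbes := Besicovitch.ae_tendsto_rnDeriv μ ν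
  have key : ∀ᵐ x ∂ν, (1 : ℝ≥0∞) ≤ μ.rnDeriv ν x := by
    filter_upwards [hbes, ae_ball_pos' ν] with x hx hxp
    apply ge_of_tendsto hx
    filter_upwards [self_mem_nhdsWithin] with r hr
    rw [mem_Ioi] at hr
    have h1 : ν (closedBall x r) ≤ μ (closedBall x r) := by
      rw [Real.closedBall_eq_Icc, hν_apply _ measurableSet_Icc]
      exact icc_bound' g μ hμ _ _
    have h2 : ν (closedBall x r) ≠ 0 := hxp r hr
    have h3 : ν (closedBall x r) ≠ ∞ :=
      (IsCompact.measure_lt_top (isCompact_closedBall x r)).ne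
    calc (1:ℝ≥0∞) = ν (closedBall x r) / ν (closedBall x r) := (ENNReal.div_self h2 h3).symm
      _ ≤ μ (closedBall x r) / ν (closedBall x r) := ENNReal.div_le_div_right h1 _
  calc ν = ν.withDensity 1 := (withDensity_one (μ := ν)).symm
    _ ≤ ν.withDensity (μ.rnDeriv ν) := withDensity_mono key
    _ ≤ μ := Measure.withDensity_rnDeriv_le μ ν

end Auxiliary

/-- For i.i.d. nonnegative `X, Y` with log-tail function
`g(x) = -log P(X > x)` (viewed as a Stieltjes function) and
`L_{m,d} = {ℓ ∈ [0,2m] : g(ℓ) + g(2m-ℓ) ≤ 2(g(m)+d)}`, one has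
`P(X+Y > 2m) ≥ e^{-2d} ⬝ |L_{m,d}|_g ⬝ P(X > m)²`. -/
theorem stmt_2 {Ω : Type*} [MeasurableSpace Ω] (P : Measure Ω) [IsProbabilityMeasure P]
    (X Y : Ω → ℝ) (hXm : Measurable X) (hYm : Measurable Y)
    (hXY : IndepFun X Y P) (hid : IdentDistrib X Y P P)
    (hX0 : ∀ ω, 0 ≤ X ω) (hY0 : ∀ ω, 0 ≤ Y ω)
    (hXu : ∀ m : ℝ, 0 < P {ω | X ω > m})
    (g : StieltjesFunction ℝ)
    (hg : ∀ x : ℝ, g x = -Real.log (P {ω | X ω > x}).toReal)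
    (m d : ℝ) (hm : 0 ≤ m) (hd : 0 ≤ d) :
    P {ω | X ω + Y ω > 2 * m} ≥
      ENNReal.ofReal (Real.exp (-(2 * d))) *
        g.measure {ℓ : ℝ | ℓ ∈ Set.Icc 0 (2 * m) ∧ g ℓ + g (2 * m - ℓ) ≤ 2 * (g m + d)} *
        (P {ω | X ω > m}) ^ 2 := by
  classical
  open Set in
  set μ := P.map X with hμdef
  haveI : IsProbabilityMeasure μ := Measure.isProbabilityMeasure_map hXm.aemeasurable
  have hP : ∀ t : ℝ, P {ω | X ω > t} = ENNReal.ofReal (Real.exp (-(g t))) := by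
    intro t
    have hpos : 0 < (P {ω | X ω > t}).toReal :=
      ENNReal.toReal_pos (hXu t).ne' (measure_ne_top P _)
    rw [hg t, neg_neg, Real.exp_log hpos, ENNReal.ofReal_toReal (measure_ne_top P _)]
  have hμ : ∀ t : ℝ, μ (Ioi t) = ENNReal.ofReal (Real.exp (-(g t))) := by
    intro t
    rw [hμdef, Measure.map_apply hXm measurableSet_Ioi]
    exact hP t
  have hmg : Measurable g := g.mono.measurable
  set L := {ℓ : ℝ | ℓ ∈ Set.Icc 0 (2 * m) ∧ g ℓ + g (2 * m - ℓ) ≤ 2 * (g m + d)} with hL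
  have hLmeas : MeasurableSet L := by
    apply MeasurableSet.inter measurableSet_Icc
    exact measurableSet_le (hmg.add (hmg.comp (measurable_const.sub measurable_id)))
      measurable_const
  have hprod : P.map (fun ω => (X ω, Y ω)) = μ.prod μ := by
    have h := (ProbabilityTheory.indepFun_iff_map_prod_eq_prod_map_map
      hXm.aemeasurable hYm.aemeasurable).1 hXY
    rw [h, ← hid.map_eq]
  have hset : MeasurableSet {p : ℝ × ℝ | p.1 + p.2 > 2 * m} :=
    measurableSet_lt measurable_const (measurable_fst.add measurable_snd)
  have hstep0 : P {ω | X ω + Y ω > 2 * m} = (μ.prod μ) {p : ℝ × ℝ | p.1 + p.2 > 2 * m} := by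
    rw [← hprod, Measure.map_apply (hXm.prodMk hYm) hset]
    rfl
  set S := {p : ℝ × ℝ | p.1 ∈ L ∧ 2 * m - p.1 < p.2} with hS
  have hSmeas : MeasurableSet S :=
    (hLmeas.preimage measurable_fst).inter
      (measurableSet_lt (measurable_const.sub measurable_fst) measurable_snd)
  have hSsub : S ⊆ {p : ℝ × ℝ | p.1 + p.2 > 2 * m} := by
    rintro p ⟨_, hp2⟩
    simp only [mem_setOf_eq]
    linarith
  have hstep1 : (μ.prod μ) S = ∫⁻ x in L, μ (Ioi (2 * m - x)) ∂μ := by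
    rw [Measure.prod_apply hSmeas, ← lintegral_indicator hLmeas]
    congr 1
    funext x
    by_cases hx : x ∈ L
    · rw [indicator_of_mem hx]
      congr 1
      ext y
      simp [hS, hx, mem_Ioi]
    · rw [indicator_of_notMem hx]
      rw [show Prod.mk x ⁻¹' S = (∅ : Set ℝ) by ext y; simp [hS, hx]]
      exact measure_empty
  have hstep2 : ENNReal.ofReal (Real.exp (-(2 * (g m + d)))) *
      ∫⁻ x in L, ENNReal.ofReal (Real.exp (g x)) ∂μ ≤
      ∫⁻ x in L, μ (Ioi (2 * m - x)) ∂μ := by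
    rw [← lintegral_const_mul' _ _ ENNReal.ofReal_ne_top]
    apply setLIntegral_mono' hLmeas
    intro x hx
    rw [hμ, ← ENNReal.ofReal_mul (Real.exp_pos _).le, ← Real.exp_add]
    apply ENNReal.ofReal_le_ofReal
    apply Real.exp_le_exp.2
    have := hx.2
    linarith
  have hstep3 : g.measure L ≤ ∫⁻ x in L, ENNReal.ofReal (Real.exp (g x)) ∂μ := by
    have hle := nu_le_mu' g μ hμ
    have heq : g.measure L = ∫⁻ x in L, ENNReal.ofReal (Real.exp (g x))
        ∂(g.measure.withDensity (fun t => ENNReal.ofReal (Real.exp (-(g t))))) := by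
      have hf1 : Measurable fun t : ℝ => ENNReal.ofReal (Real.exp (-(g t))) :=
        ENNReal.measurable_ofReal.comp (Real.measurable_exp.comp hmg.neg)
      have hf2 : Measurable fun t : ℝ => ENNReal.ofReal (Real.exp (g t)) :=
        ENNReal.measurable_ofReal.comp (Real.measurable_exp.comp hmg)
      rw [restrict_withDensity hLmeas,
        lintegral_withDensity_eq_lintegral_mul _ hf1 hf2]
      have : ∀ x : ℝ, ((fun t => ENNReal.ofReal (Real.exp (-(g t)))) *
          fun x => ENNReal.ofReal (Real.exp (g x))) x = 1 := by
        intro x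
        simp only [Pi.mul_apply]
        rw [← ENNReal.ofReal_mul (Real.exp_pos _).le, ← Real.exp_add, neg_add_cancel,
          Real.exp_zero, ENNReal.ofReal_one]
      simp_rw [this]
      rw [setLIntegral_one]
    rw [heq]
    exact lintegral_mono' (Measure.restrict_mono (subset_refl L) hle) (le_refl _)
  have halg : ENNReal.ofReal (Real.exp (-(2 * d))) * g.measure L * (P {ω | X ω > m}) ^ 2
      = ENNReal.ofReal (Real.exp (-(2 * (g m + d)))) * g.measure L := by
    rw [hP m, ← ENNReal.ofReal_pow (Real.exp_pos _).le, mul_right_comm,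
      ← ENNReal.ofReal_mul (Real.exp_pos _).le]
    congr 2
    rw [sq, ← Real.exp_add, ← Real.exp_add]
    congr 1
    ring
  calc ENNReal.ofReal (Real.exp (-(2 * d))) * g.measure L * (P {ω | X ω > m}) ^ 2
      = ENNReal.ofReal (Real.exp (-(2 * (g m + d)))) * g.measure L := halg
    _ ≤ ENNReal.ofReal (Real.exp (-(2 * (g m + d)))) *
        ∫⁻ x in L, ENNReal.ofReal (Real.exp (g x)) ∂μ := mul_le_mul_right hstep3 _
    _ ≤ ∫⁻ x in L, μ (Ioi (2 * m - x)) ∂μ := hstep2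
    _ = (μ.prod μ) S := hstep1.symm
    _ ≤ (μ.prod μ) {p : ℝ × ℝ | p.1 + p.2 > 2 * m} := measure_mono hSsub
    _ = P {ω | X ω + Y ω > 2 * m} := hstep0.symm
end

section
/- Let g : [0,∞) → [0,∞) be nondecreasing with g(0)=0, and let h be its convex minorant, i.e., the pointwise supremum of all nondecreasing convex functions ≤ g. If I = [x₀, x₁] ⊂ [0,∞) is a closed interval with inf_I (g - h) > 0, then h is affine on I. -/
/-- Let `g : [0,∞) → [0,∞)` be nondecreasing with `g 0 = 0`, and let `h` be
its convex minorant (the maximal nondecreasing convex function `≤ g` on `[0,∞)`).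
If `inf_{[x₀,x₁]} (g - h) > 0`, then `h` is affine on `[x₀,x₁]`. -/
theorem stmt_5 (g h : ℝ → ℝ)
    (hg_mono : MonotoneOn g (Set.Ici 0)) (hg_nonneg : ∀ x ∈ Set.Ici (0:ℝ), 0 ≤ g x)
    (hg0 : g 0 = 0)
    (hh_conv : ConvexOn ℝ (Set.Ici 0) h) (hh_mono : MonotoneOn h (Set.Ici 0))
    (hh_le : ∀ x ∈ Set.Ici (0:ℝ), h x ≤ g x)
    (hh_max : ∀ h' : ℝ → ℝ, ConvexOn ℝ (Set.Ici 0) h' → MonotoneOn h' (Set.Ici 0) →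
      (∀ x ∈ Set.Ici (0:ℝ), h' x ≤ g x) → ∀ x ∈ Set.Ici (0:ℝ), h' x ≤ h x)
    (x₀ x₁ : ℝ) (hx₀ : 0 ≤ x₀) (hx₀₁ : x₀ ≤ x₁)
    (hinf : 0 < sInf ((fun x => g x - h x) '' Set.Icc x₀ x₁)) :
    ∃ a b : ℝ, ∀ x ∈ Set.Icc x₀ x₁, h x = a * x + b := by
  rcases eq_or_lt_of_le hx₀₁ with heq | hlt
  · refine ⟨0, h x₀, fun x hx => ?_⟩
    have hx' : x = x₀ := le_antisymm (heq ▸ hx.2) hx.1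
    simp [hx']
  have hx₁0 : (0:ℝ) ≤ x₁ := hx₀.trans hx₀₁
  have hd : (0:ℝ) < x₁ - x₀ := sub_pos.2 hlt
  have hx₀m : x₀ ∈ Set.Ici (0:ℝ) := hx₀
  have hx₁m : x₁ ∈ Set.Ici (0:ℝ) := hx₁0
  set s : ℝ := (h x₁ - h x₀) / (x₁ - x₀) with hs_def
  have hsd : s * (x₁ - x₀) = h x₁ - h x₀ := div_mul_cancel₀ _ hd.ne'
  have hs : 0 ≤ s := div_nonneg (sub_nonneg.2 (hh_mono hx₀m hx₁m hx₀₁)) hd.le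
  set L : ℝ → ℝ := fun x => s * x + (h x₀ - s * x₀) with hL_def
  have hLmono : Monotone L := fun a b hab => by
    simp only [hL_def]
    nlinarith [mul_le_mul_of_nonneg_left hab hs]
  have hLx₀ : L x₀ = h x₀ := by simp [hL_def]
  have hLx₁ : L x₁ = h x₁ := by simp only [hL_def]; nlinarith [hsd]
  -- h ≤ L on the interval
  have hA : ∀ x ∈ Set.Icc x₀ x₁, h x ≤ L x := by
    intro x hx
    rcases eq_or_lt_of_le hx.1 with h1 | h1
    · rw [← h1, hLx₀]
    rcases eq_or_lt_of_le hx.2 with h2 | h2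
    · rw [h2, hLx₁]
    have key := hh_conv.secant_mono_aux1 hx₀m hx₁m h1 h2
    have hsx : s * (x₁ - x₀) * (x - x₀) = (h x₁ - h x₀) * (x - x₀) := by rw [hsd]
    simp only [hL_def]
    nlinarith [key, hsx]
  -- L ≤ h outside the open interval (within [0,∞))
  have hB : ∀ x ∈ Set.Ici (0:ℝ), x ∉ Set.Icc x₀ x₁ → L x ≤ h x := by
    intro x hxm hxI
    simp only [Set.mem_Icc, not_and_or, not_le] at hxI
    rcases hxI with hc | hc
    · have key := hh_conv.secant_mono_aux1 hxm hx₁m hc hlt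
      have hsx : s * (x₁ - x₀) * (x₀ - x) = (h x₁ - h x₀) * (x₀ - x) := by rw [hsd]
      simp only [hL_def]
      nlinarith [key, hsx]
    · have key := hh_conv.secant_mono_aux1 hx₀m hxm hlt hc
      have hsx : s * (x₁ - x₀) * (x - x₀) = (h x₁ - h x₀) * (x - x₀) := by rw [hsd]
      simp only [hL_def]
      nlinarith [key, hsx]
  set M : ℝ := h x₁ - h x₀ with hM_def
  have hM : 0 ≤ M := sub_nonneg.2 (hh_mono hx₀m hx₁m hx₀₁)
  rcases eq_or_lt_of_le hM with hM0 | hMpos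
  · -- h is constant on the interval
    refine ⟨0, h x₀, fun x hx => ?_⟩
    have hxm : x ∈ Set.Ici (0:ℝ) := le_trans hx₀ hx.1
    have h1 := hh_mono hx₀m hxm hx.1
    have h2 := hh_mono hxm hx₁m hx.2
    have : h x₁ = h x₀ := by simp only [hM_def] at hM0; linarith
    simp only [zero_mul, zero_add]
    linarith
  -- the infimum bound
  have hbdd : BddBelow ((fun x => g x - h x) '' Set.Icc x₀ x₁) := by
    refine ⟨0, ?_⟩
    rintro y ⟨x, hx, rfl⟩
    have hxm : x ∈ Set.Ici (0:ℝ) := le_trans hx₀ hx.1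
    have := hh_le x hxm
    simp only [sub_nonneg]
    linarith
  have hub : ∀ x ∈ Set.Icc x₀ x₁, sInf ((fun x => g x - h x) '' Set.Icc x₀ x₁) ≤ g x - h x :=
    fun x hx => csInf_le hbdd ⟨x, hx, rfl⟩
  set ε : ℝ := sInf ((fun x => g x - h x) '' Set.Icc x₀ x₁) with hε_def
  set t : ℝ := min 1 (ε / M) with ht_def
  have ht0 : 0 < t := lt_min one_pos (div_pos hinf hMpos)
  have ht1 : t ≤ 1 := min_le_left _ _
  have htM : t * M ≤ ε := by
    calc t * M ≤ (ε / M) * M := mul_le_mul_of_nonneg_right (min_le_right _ _) hM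
    _ = ε := div_mul_cancel₀ _ hMpos.ne'
  set h' : ℝ → ℝ := fun x => (1 - t) * h x + t * max (h x) (L x) with hh'_def
  have hLconv : ConvexOn ℝ (Set.Ici 0) L := by
    have h1 : ConvexOn ℝ (Set.Ici 0) (fun x : ℝ => s • x) :=
      (convexOn_id (convex_Ici 0)).smul hs
    have h2 := h1.add_const (h x₀ - s * x₀)
    simpa [hL_def, smul_eq_mul, Pi.add_def] using h2
  have hconv' : ConvexOn ℝ (Set.Ici 0) h' := by
    have h1 : ConvexOn ℝ (Set.Ici 0) (fun x => (1 - t) • h x) :=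
      hh_conv.smul (by linarith)
    have h2 : ConvexOn ℝ (Set.Ici 0) (fun x => t • (h ⊔ L) x) :=
      (hh_conv.sup hLconv).smul ht0.le
    have := h1.add h2
    simpa [hh'_def, smul_eq_mul, Pi.sup_apply, Pi.add_def] using this
  have hmono' : MonotoneOn h' (Set.Ici 0) := by
    intro a ha b hb hab
    simp only [hh'_def]
    have h1 := hh_mono ha hb hab
    have h2 := hLmono hab
    have h3 : max (h a) (L a) ≤ max (h b) (L b) := max_le_max h1 h2
    have h4 : (0:ℝ) ≤ 1 - t := by linarith
    have := mul_le_mul_of_nonneg_left h1 h4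
    have := mul_le_mul_of_nonneg_left h3 ht0.le
    linarith
  have hle' : ∀ x ∈ Set.Ici (0:ℝ), h' x ≤ g x := by
    intro x hxm
    by_cases hxI : x ∈ Set.Icc x₀ x₁
    · have hmax : max (h x) (L x) ≤ h x + M := by
        refine max_le (by linarith) ?_
        have hL1 : L x ≤ L x₁ := hLmono hxI.2
        have h0x : h x₀ ≤ h x := hh_mono hx₀m hxm hxI.1
        rw [hLx₁] at hL1
        simp only [hM_def]
        linarith
      have hεx := hub x hxI
      have h1 : t * max (h x) (L x) ≤ t * (h x + M) :=
        mul_le_mul_of_nonneg_left hmax ht0.le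
      simp only [hh'_def]
      nlinarith [h1, htM, hεx]
    · have hLh := hB x hxm hxI
      simp only [hh'_def, max_eq_left hLh]
      have := hh_le x hxm
      nlinarith
  have hfin := hh_max h' hconv' hmono' hle'
  refine ⟨s, h x₀ - s * x₀, fun x hx => ?_⟩
  have hxm : x ∈ Set.Ici (0:ℝ) := le_trans hx₀ hx.1
  have h1 := hfin x hxm
  simp only [hh'_def] at h1
  have h2 : t * max (h x) (L x) ≤ t * h x := by linarith
  have h3 : max (h x) (L x) ≤ h x := le_of_mul_le_mul_left h2 ht0
  have h4 : L x ≤ h x := le_trans (le_max_right _ _) h3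
  have h5 := hA x hx
  simp only [hL_def] at h4 h5 ⊢
  linarith
end

section
/- Let d > 0 and let f : [0,∞) → [0,∞) be an increasing convex function with f(0) = 0 and f(x) → ∞ as x → ∞. Then limsup_{m→∞} (f(m+t(m)) - f(m-t(m))) = ∞, where [m - t(m), m + t(m)] = {ℓ ∈ [0,2m] : f(ℓ)+f(2m-ℓ) ≤ 2(f(m)+d)}; equivalently, limsup_{m→∞} |L^f_{m,d}|_f = ∞. -/
open Filter

lemma slope_gen {f : ℝ → ℝ} (hf : ConvexOn ℝ (Set.Ici 0) f) {a b c e : ℝ}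
    (ha : 0 ≤ a) (hc : 0 ≤ c) (hab : a < b) (hce : c < e) (hac : a ≤ c) (hbe : b ≤ e) :
    (f b - f a) / (b - a) ≤ (f e - f c) / (e - c) := by
  have hb : (0:ℝ) ≤ b := le_of_lt (lt_of_le_of_lt ha hab)
  have he : (0:ℝ) ≤ e := le_of_lt (lt_of_le_of_lt hc hce)
  have hae : a < e := lt_of_le_of_lt hac hce
  have h1 : (f b - f a) / (b - a) ≤ (f e - f a) / (e - a) :=
    hf.secant_mono (Set.mem_Ici.mpr ha) (Set.mem_Ici.mpr hb) (Set.mem_Ici.mpr he)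
      (ne_of_gt hab) (ne_of_gt hae) hbe
  have h2 : (f a - f e) / (a - e) ≤ (f c - f e) / (c - e) :=
    hf.secant_mono (Set.mem_Ici.mpr he) (Set.mem_Ici.mpr ha) (Set.mem_Ici.mpr hc)
      (ne_of_lt hae) (ne_of_lt hce) hac
  have e1 : (f a - f e) / (a - e) = (f e - f a) / (e - a) := by
    rw [show f a - f e = -(f e - f a) from by ring, show a - e = -(e - a) from by ring,
      neg_div_neg_eq]
  have e2 : (f c - f e) / (c - e) = (f e - f c) / (e - c) := by
    rw [show f c - f e = -(f e - f c) from by ring, show c - e = -(e - c) from by ring,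
      neg_div_neg_eq]
  rw [e1, e2] at h2
  exact h1.trans h2

/-- the iterated sequence `m, m + t m, ...` -/
def sqt (t : ℝ → ℝ) (M : ℝ) : ℕ → ℝ
  | 0 => M
  | (k+1) => sqt t M k + t (sqt t M k)

/-- Let `d > 0` and `f : [0,∞) → [0,∞)` be increasing, convex, with
`f 0 = 0` and `f(x) → ∞`.  If `[m - t m, m + t m]` is the set
`L^f_{m,d} = {ℓ ∈ [0,2m] : f(ℓ)+f(2m-ℓ) ≤ 2(f(m)+d)}`, then
`limsup_{m→∞} (f(m + t m) - f(m - t m)) = ∞`. -/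
theorem stmt_6 (d : ℝ) (hd : 0 < d) (f : ℝ → ℝ)
    (hf_mono : StrictMonoOn f (Set.Ici 0)) (hf_conv : ConvexOn ℝ (Set.Ici 0) f)
    (hf_nonneg : ∀ x ∈ Set.Ici (0:ℝ), 0 ≤ f x) (hf0 : f 0 = 0)
    (hf_top : Filter.Tendsto f Filter.atTop Filter.atTop)
    (t : ℝ → ℝ)
    (ht : ∀ m : ℝ, 0 < m →
      {ℓ : ℝ | ℓ ∈ Set.Icc 0 (2 * m) ∧ f ℓ + f (2 * m - ℓ) ≤ 2 * (f m + d)} =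
        Set.Icc (m - t m) (m + t m)) :
    ∀ C : ℝ, ∃ᶠ m in Filter.atTop, C < f (m + t m) - f (m - t m) := by
  intro C
  rw [Filter.frequently_atTop]
  intro a
  by_contra hcon
  push_neg at hcon
  -- hcon : ∀ b ≥ a, f (b + t b) - f (b - t b) ≤ C
  obtain ⟨C₁, hC₁def⟩ : ∃ x : ℝ, x = max C (2*d+1) := ⟨_, rfl⟩
  have hCC₁ : C ≤ C₁ := hC₁def ▸ le_max_left _ _
  have h2dC : 2*d < C₁ := hC₁def ▸ lt_of_lt_of_le (by linarith) (le_max_right _ _)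
  have hC₁pos : 0 < C₁ := by linarith
  have hmonoOn : MonotoneOn f (Set.Ici 0) := hf_mono.monotoneOn
  obtain ⟨X, hX⟩ := Filter.eventually_atTop.mp (hf_top.eventually_gt_atTop C₁)
  obtain ⟨M₁, hM₁def⟩ : ∃ x : ℝ, x = max (max a 1) X := ⟨_, rfl⟩
  have hM₁a : a ≤ M₁ := hM₁def ▸ le_trans (le_max_left a 1) (le_max_left _ X)
  have hM₁1 : (1:ℝ) ≤ M₁ := hM₁def ▸ le_trans (le_max_right a 1) (le_max_left _ X)
  have hM₁X : X ≤ M₁ := hM₁def ▸ le_max_right _ _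
  have hM₁pos : (0:ℝ) < M₁ := by linarith
  have hcontOn : ContinuousOn f (Set.Ioi (0:ℝ)) := by
    have h := hf_conv.continuousOn_interior
    rwa [interior_Ici] at h
  -- The key per-point facts
  have step : ∀ m : ℝ, M₁ ≤ m →
      0 < t m ∧ t m < m ∧ f (m + t m) + f (m - t m) = 2*(f m + d) := by
    intro m hm
    have hm0 : (0:ℝ) < m := lt_of_lt_of_le hM₁pos hm
    have hS := ht m hm0
    have hmem : m ∈ Set.Icc (m - t m) (m + t m) := by
      rw [← hS]
      simp only [Set.mem_setOf_eq, Set.mem_Icc]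
      refine ⟨⟨by linarith, by linarith⟩, ?_⟩
      rw [show 2*m - m = m from by ring]
      linarith
    obtain ⟨hm1, hm2⟩ := Set.mem_Icc.mp hmem
    have ht0 : 0 ≤ t m := by linarith
    have hend : m - t m ∈ Set.Icc (m - t m) (m + t m) :=
      Set.mem_Icc.mpr ⟨le_refl _, by linarith⟩
    rw [← hS] at hend
    simp only [Set.mem_setOf_eq, Set.mem_Icc] at hend
    obtain ⟨⟨hq1, hq2⟩, hq3⟩ := hend
    have hq3' : f (m - t m) + f (m + t m) ≤ 2*(f m + d) := by
      rwa [show 2*m - (m - t m) = m + t m from by ring] at hq3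
    have htm : t m ≤ m := by linarith
    have hdiff : f (m + t m) - f (m - t m) ≤ C₁ :=
      le_trans (hcon m (le_trans hM₁a hm)) hCC₁
    have hf2m : C₁ < f (2*m) := hX (2*m) (by linarith)
    have htlt : t m < m := by
      rcases lt_or_eq_of_le htm with h | h
      · exact h
      · exfalso
        have e1 : m + t m = 2*m := by rw [h]; ring
        have e2 : m - t m = 0 := by rw [h]; ring
        rw [e1, e2, hf0] at hdiff
        linarith
    -- continuity gives the reverse inequality at the right endpoint
    have hc1 : ContinuousAt f (m + t m) :=
      hcontOn.continuousAt (Ioi_mem_nhds (by linarith))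
    have hc2' : ContinuousAt f (2*m - (m + t m)) := by
      rw [show 2*m - (m + t m) = m - t m from by ring]
      exact hcontOn.continuousAt (Ioi_mem_nhds (by linarith))
    have hlin : ContinuousAt (fun ℓ : ℝ => 2*m - ℓ) (m + t m) := by fun_prop
    have hcomp : ContinuousAt (fun ℓ : ℝ => f (2*m - ℓ)) (m + t m) := hc2'.comp hlin
    have hgc : ContinuousAt (fun ℓ : ℝ => f ℓ + f (2*m - ℓ)) (m + t m) := hc1.add hcomp
    have hgt : Filter.Tendsto (fun ℓ : ℝ => f ℓ + f (2*m - ℓ))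
        (nhdsWithin (m + t m) (Set.Ioi (m + t m)))
        (nhds (f (m + t m) + f (m - t m))) := by
      have h : Filter.Tendsto (fun ℓ : ℝ => f ℓ + f (2*m - ℓ))
          (nhdsWithin (m + t m) (Set.Ioi (m + t m)))
          (nhds (f (m + t m) + f (2*m - (m + t m)))) := hgc.continuousWithinAt
      rwa [show 2*m - (m + t m) = m - t m from by ring] at h
    have hge : 2*(f m + d) ≤ f (m + t m) + f (m - t m) := by
      refine ge_of_tendsto hgt ?_
      filter_upwards [Ioc_mem_nhdsGT_of_mem (c := m + t m) (a := 2*m) (Set.mem_Ico.mpr ⟨le_refl (m + t m), by linarith⟩)]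
        with ℓ hℓ
      obtain ⟨hℓ1, hℓ2⟩ := Set.mem_Ioc.mp hℓ
      by_contra hlt
      push_neg at hlt
      have hmem2 : ℓ ∈ Set.Icc (m - t m) (m + t m) := by
        rw [← hS]
        simp only [Set.mem_setOf_eq, Set.mem_Icc]
        exact ⟨⟨by linarith, hℓ2⟩, hlt.le⟩
      have := (Set.mem_Icc.mp hmem2).2
      linarith
    have hE : f (m + t m) + f (m - t m) = 2*(f m + d) := le_antisymm (by linarith) hge
    have hfmono1 : f (m - t m) ≤ f m :=
      hmonoOn (Set.mem_Ici.mpr (by linarith)) (Set.mem_Ici.mpr hm0.le) (by linarith)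
    have hfm_lt : f m < f (m + t m) := by linarith
    have htne : t m ≠ 0 := by
      intro h0
      rw [h0, add_zero] at hfm_lt
      exact lt_irrefl _ hfm_lt
    exact ⟨lt_of_le_of_ne ht0 (Ne.symm htne), htlt, hE⟩
  -- the sequence
  obtain ⟨s, hsdef⟩ : ∃ s' : ℕ → ℝ, s' = sqt t M₁ := ⟨_, rfl⟩
  have hs0 : s 0 = M₁ := by rw [hsdef]; rfl
  have hss : ∀ k, s (k+1) = s k + t (s k) := by intro k; rw [hsdef]; rfl
  have hsM : ∀ k, M₁ ≤ s k := by
    intro k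
    induction k with
    | zero => exact le_of_eq hs0.symm
    | succ n ih =>
      have h1 := (step (s n) ih).1
      rw [hss n]; linarith
  have hstep := fun k => step (s k) (hsM k)
  have hTpos : ∀ k, 0 < t (s k) := fun k => (hstep k).1
  have hTlt : ∀ k, t (s k) < s k := fun k => (hstep k).2.1
  have hEk : ∀ k, f (s k + t (s k)) + f (s k - t (s k)) = 2*(f (s k) + d) :=
    fun k => (hstep k).2.2
  have hs_pos : ∀ k, 0 < s k := fun k => lt_of_lt_of_le hM₁pos (hsM k)
  have hsub_nonneg : ∀ k, 0 ≤ s k - t (s k) := fun k => by linarith [hTlt k]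
  have hBnonneg : ∀ k, 0 ≤ f (s k) - f (s k - t (s k)) := by
    intro k
    have := hmonoOn (Set.mem_Ici.mpr (hsub_nonneg k)) (Set.mem_Ici.mpr (hs_pos k).le)
      (by linarith [hTpos k])
    linarith
  have hdiffk : ∀ k, f (s k + t (s k)) - f (s k - t (s k)) ≤ C₁ :=
    fun k => le_trans (hcon (s k) (le_trans hM₁a (hsM k))) hCC₁
  have hA_eq : ∀ k, f (s (k+1)) - f (s k) = (f (s k) - f (s k - t (s k))) + 2*d := by
    intro k
    rw [hss k]
    linarith [hEk k]
  have hA2d : ∀ k, 2*d ≤ f (s (k+1)) - f (s k) := by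
    intro k
    rw [hA_eq k]
    linarith [hBnonneg k]
  have hAC₁ : ∀ k, f (s (k+1)) - f (s k) ≤ C₁ := by
    intro k
    rw [hss k]
    linarith [hdiffk k, hBnonneg k]
  have hBC₁ : ∀ k, f (s k) - f (s k - t (s k)) ≤ C₁ := by
    intro k
    have h1 := hA_eq k
    have h2 := hAC₁ k
    linarith [hd]
  have hsmono : Monotone s := by
    apply monotone_nat_of_le_succ
    intro k
    rw [hss k]
    linarith [hTpos k]
  -- slopes
  obtain ⟨ρ, hρdef⟩ : ∃ g : ℕ → ℝ, g = fun k => (f (s (k+1)) - f (s k)) / t (s k) := ⟨_, rfl⟩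
  have hρpos : ∀ k, 0 < ρ k := by
    intro k
    simp only [hρdef]
    exact div_pos (by linarith [hA2d k]) (hTpos k)
  have htmul : ∀ k, t (s k) * ρ k = f (s (k+1)) - f (s k) := by
    intro k
    simp only [hρdef]
    rw [mul_comm]
    exact div_mul_cancel₀ _ (ne_of_gt (hTpos k))
  have hslt : ∀ k, s k < s (k+1) := by
    intro k
    rw [hss k]
    linarith [hTpos k]
  have hρmono : Monotone ρ := by
    apply monotone_nat_of_le_succ
    intro k
    have hg := slope_gen hf_conv (hs_pos k).le (hs_pos (k+1)).le (hslt k) (hslt (k+1))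
      (hslt k).le (hslt (k+1)).le
    have e1 : s (k+1) - s k = t (s k) := by rw [hss k]; ring
    have e2 : s (k+2) - s (k+1) = t (s (k+1)) := by rw [hss (k+1)]; ring
    rw [e1, e2] at hg
    simp only [hρdef]
    exact hg
  obtain ⟨μ, hμdef⟩ : ∃ x : ℝ, x = 1 - 2*d/C₁ := ⟨_, rfl⟩
  have hμpos : 0 < μ := by
    have h1 : 2*d/C₁ < 1 := (div_lt_one hC₁pos).mpr h2dC
    rw [hμdef]; linarith
  have hμlt1 : μ < 1 := by
    have h1 : 0 < 2*d/C₁ := div_pos (by linarith) hC₁pos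
    rw [hμdef]; linarith
  have hgoodρ : ∀ k, t (s (k+1)) ≤ t (s k) → ρ k ≤ μ * ρ (k+1) := by
    intro k hgd
    have hssk := hss k
    have h1 : ρ k ≤ (f (s (k+1)) - f (s (k+1) - t (s (k+1)))) / t (s (k+1)) := by
      have hg := slope_gen hf_conv (a := s k) (b := s (k+1)) (c := s (k+1) - t (s (k+1)))
        (e := s (k+1)) (hs_pos k).le (hsub_nonneg (k+1)) (hslt k)
        (by linarith [hTpos (k+1)]) (by linarith) (le_refl _)
      have e1 : s (k+1) - s k = t (s k) := by rw [hss k]; ring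
      have e2 : s (k+1) - (s (k+1) - t (s (k+1))) = t (s (k+1)) := by ring
      rw [e1, e2] at hg
      simp only [hρdef]
      exact hg
    have h2 : ρ (k+1) = (f (s (k+1)) - f (s (k+1) - t (s (k+1)))) / t (s (k+1))
        + 2*d / t (s (k+1)) := by
      simp only [hρdef]
      rw [hA_eq (k+1), add_div]
    have hρt : t (s (k+1)) * ρ (k+1) ≤ C₁ := by
      rw [htmul (k+1)]; exact hAC₁ (k+1)
    have h3 : 2*d*ρ (k+1)/C₁ ≤ 2*d / t (s (k+1)) := by
      rw [div_le_div_iff₀ hC₁pos (hTpos (k+1))]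
      nlinarith [hρt, hd.le]
    have h4 : μ * ρ (k+1) = ρ (k+1) - 2*d*ρ (k+1)/C₁ := by
      rw [hμdef]; ring
    linarith
  have hbadB : ∀ k, t (s k) < t (s (k+1)) →
      (f (s k) - f (s k - t (s k))) + 2*d ≤ f (s (k+1)) - f (s (k+1) - t (s (k+1))) := by
    intro k hk
    have hssk := hss k
    have h0 : s (k+1) - t (s (k+1)) ≤ s k := by linarith
    have h1 : f (s (k+1) - t (s (k+1))) ≤ f (s k) :=
      hmonoOn (Set.mem_Ici.mpr (hsub_nonneg (k+1))) (Set.mem_Ici.mpr (hs_pos k).le) h0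
    have h2 := hA_eq k
    linarith
  -- window size
  obtain ⟨N, hN⟩ := exists_nat_gt (C₁/(2*d))
  have hN' : C₁ < 2*d*((N:ℝ)+1) := by
    rw [div_lt_iff₀ (by linarith : (0:ℝ) < 2*d)] at hN
    nlinarith [hd]
  -- in every window of length N+1 there is a "good" index
  have window : ∀ j : ℕ, ∃ w : ℕ, w ≤ N ∧ t (s (j+w+1)) ≤ t (s (j+w)) := by
    intro j
    by_contra h
    push_neg at h
    have grow : ∀ i : ℕ, i ≤ N+1 →
        (f (s j) - f (s j - t (s j))) + 2*d*(i:ℝ) ≤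
          f (s (j+i)) - f (s (j+i) - t (s (j+i))) := by
      intro i
      induction i with
      | zero => intro _; simp
      | succ n ih =>
        intro hn
        have h1 := ih (by omega)
        have h2 := hbadB (j+n) (h n (by omega))
        rw [← Nat.add_assoc] at *
        push_cast
        push_cast at h1
        linarith
    have hfin := grow (N+1) le_rfl
    rw [← Nat.add_assoc] at hfin
    push_cast at hfin
    linarith [hBnonneg j, hBC₁ (j+N+1), hBnonneg (j+N+1)]
  have hρ0pos := hρpos 0
  -- geometric growth of ρ
  have P : ∀ i : ℕ, ρ 0 ≤ μ^i * ρ ((N+1)*i) := by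
    intro i
    induction i with
    | zero => simp
    | succ i ih =>
      obtain ⟨w, hwN, hwgood⟩ := window ((N+1)*i)
      set j := (N+1)*i with hj
      have hμi : (0:ℝ) ≤ μ^i := pow_nonneg hμpos.le i
      have harg : (N+1)*(i+1) = j + (N+1) := by rw [hj]; ring
      calc ρ 0 ≤ μ^i * ρ j := ih
        _ ≤ μ^i * ρ (j + w) := mul_le_mul_of_nonneg_left (hρmono (Nat.le_add_right _ _)) hμi
        _ ≤ μ^i * (μ * ρ (j + w + 1)) :=
            mul_le_mul_of_nonneg_left (hgoodρ (j+w) hwgood) hμi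
        _ ≤ μ^i * (μ * ρ (j + (N+1))) := by
            apply mul_le_mul_of_nonneg_left _ hμi
            apply mul_le_mul_of_nonneg_left _ hμpos.le
            apply hρmono
            omega
        _ = μ^(i+1) * ρ ((N+1)*(i+1)) := by rw [harg]; ring
  -- bound on t along the sequence
  have htle : ∀ i k : ℕ, (N+1)*i ≤ k → t (s k) ≤ (C₁/ρ 0) * μ^i := by
    intro i k hk
    have h1 : ρ 0 ≤ μ^i * ρ k :=
      (P i).trans (mul_le_mul_of_nonneg_left (hρmono hk) (pow_nonneg hμpos.le i))
    have h2 : t (s k) * ρ k ≤ C₁ := by rw [htmul k]; exact hAC₁ k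
    have hρk := hρpos k
    have hμi : (0:ℝ) < μ^i := pow_pos hμpos i
    -- t ≤ C₁/ρ k ≤ C₁ μ^i / ρ 0
    have h3 : t (s k) ≤ C₁ / ρ k := by
      rw [le_div_iff₀ hρk]; exact h2
    have h4 : C₁ / ρ k ≤ (C₁/ρ 0) * μ^i := by
      rw [div_le_iff₀ hρk]
      rw [div_mul_eq_mul_div, div_mul_eq_mul_div, le_div_iff₀ hρ0pos]
      nlinarith [h1, hC₁pos.le]
    linarith
  -- block bound
  have hblock : ∀ i j : ℕ, j ≤ N+1 →
      s ((N+1)*i + j) ≤ s ((N+1)*i) + (j:ℝ) * ((C₁/ρ 0) * μ^i) := by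
    intro i j
    induction j with
    | zero => intro _; simp
    | succ n ih =>
      intro hn
      have h1 := ih (by omega)
      have h2 := htle i ((N+1)*i + n) (Nat.le_add_right _ _)
      rw [← Nat.add_assoc, hss ((N+1)*i + n)]
      push_cast
      push_cast at h1
      linarith
  obtain ⟨K, hKdef⟩ : ∃ x : ℝ, x = ((N:ℝ)+1) * (C₁/ρ 0) / (1-μ) := ⟨_, rfl⟩
  have hμne : (1:ℝ) - μ ≠ 0 := by linarith
  have hK : K * (1-μ) = ((N:ℝ)+1) * (C₁/ρ 0) := by
    rw [hKdef]
    field_simp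
  have hKpos : 0 ≤ K := by
    rw [hKdef]
    apply div_nonneg
    · apply mul_nonneg (by positivity)
      exact (div_pos hC₁pos hρ0pos).le
    · linarith
  have Q : ∀ i : ℕ, s ((N+1)*i) ≤ M₁ + K * (1 - μ^i) := by
    intro i
    induction i with
    | zero => simp [hs0]
    | succ i ih =>
      have harg : (N+1)*(i+1) = (N+1)*i + (N+1) := by ring
      have h1 := hblock i (N+1) le_rfl
      calc s ((N+1)*(i+1)) = s ((N+1)*i + (N+1)) := by rw [harg]
        _ ≤ s ((N+1)*i) + ((N+1:ℕ):ℝ) * ((C₁/ρ 0) * μ^i) := h1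
        _ ≤ M₁ + K*(1-μ^i) + ((N+1:ℕ):ℝ) * ((C₁/ρ 0) * μ^i) := by linarith
        _ = M₁ + K * (1 - μ^(i+1)) := by push_cast; linear_combination (-(μ^i)) * hK
  have hbound : ∀ k : ℕ, s k ≤ M₁ + K := by
    intro k
    have h1 : s k ≤ s ((N+1)*k) := hsmono (Nat.le_mul_of_pos_left k (Nat.succ_pos N))
    have h2 := Q k
    have h3 : (0:ℝ) ≤ μ^k := pow_nonneg hμpos.le k
    nlinarith [hKpos]
  have growth : ∀ k : ℕ, f M₁ + 2*d*(k:ℝ) ≤ f (s k) := by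
    intro k
    induction k with
    | zero => simp [hs0]
    | succ n ih =>
      have h1 := hA2d n
      push_cast
      push_cast at ih
      linarith
  obtain ⟨k, hk⟩ := exists_nat_gt ((f (M₁ + K) - f M₁)/(2*d))
  have h1 := growth k
  have h2 : f (s k) ≤ f (M₁ + K) :=
    hmonoOn (Set.mem_Ici.mpr (hs_pos k).le) (Set.mem_Ici.mpr (by linarith : (0:ℝ) ≤ M₁ + K))
      (hbound k)
  have h3 : f (M₁ + K) - f M₁ < 2*d*(k:ℝ) := by
    rw [div_lt_iff₀ (by linarith : (0:ℝ) < 2*d)] at hk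
    linarith [mul_comm (2*d) (k:ℝ)]
  linarith
end

section
/- Let g : [0,∞) → [0,∞) be nondecreasing with g(0)=0 and g(x)→∞, and let h be its convex minorant. If g(x) - h(x) → ∞ as x → ∞, then limsup_{m→∞} (2g(m) - g(2m)) = ∞. -/
open Filter

/-- Let `g : [0,∞) → [0,∞)` be nondecreasing with `g 0 = 0` and `g(x) → ∞`,
and let `h` be its convex minorant.  If `g(x) - h(x) → ∞`, then
`limsup_{m→∞} (2 g(m) - g(2m)) = ∞`. -/
theorem stmt_8 (g h : ℝ → ℝ)
    (hg_mono : MonotoneOn g (Set.Ici 0)) (hg_nonneg : ∀ x ∈ Set.Ici (0:ℝ), 0 ≤ g x)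
    (hg0 : g 0 = 0) (hg_top : Filter.Tendsto g Filter.atTop Filter.atTop)
    (hh_conv : ConvexOn ℝ (Set.Ici 0) h) (hh_mono : MonotoneOn h (Set.Ici 0))
    (hh_le : ∀ x ∈ Set.Ici (0:ℝ), h x ≤ g x)
    (hh_max : ∀ h' : ℝ → ℝ, ConvexOn ℝ (Set.Ici 0) h' → MonotoneOn h' (Set.Ici 0) →
      (∀ x ∈ Set.Ici (0:ℝ), h' x ≤ g x) → ∀ x ∈ Set.Ici (0:ℝ), h' x ≤ h x)
    (hgap : Filter.Tendsto (fun x => g x - h x) Filter.atTop Filter.atTop) :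
    ∀ C : ℝ, ∃ᶠ m in Filter.atTop, C < 2 * g m - g (2 * m) := by
  classical
  intro C
  rw [Filter.frequently_atTop]
  by_contra hcon
  push_neg at hcon
  obtain ⟨M, hM⟩ := hcon
  set C' : ℝ := max C 0 with hC'def
  have hC'0 : 0 ≤ C' := le_max_right _ _
  have hA : ∀ m, M ≤ m → 2 * g m - g (2 * m) ≤ C' := fun m hm =>
    (hM m hm).trans (le_max_left _ _)
  -- h is nonnegative on [0,∞)
  have hh0 : ∀ x ∈ Set.Ici (0:ℝ), (0:ℝ) ≤ h x := by
    intro x hx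
    have := hh_max (fun _ => 0) (convexOn_const 0 (convex_Ici 0))
      (monotoneOn_const) (fun y hy => hg_nonneg y hy) x hx
    simpa using this
  -- choose x₀ ≥ 1 with gap ≥ 1 beyond x₀
  obtain ⟨x₀', hx₀'⟩ := Filter.eventually_atTop.mp (hgap.eventually_ge_atTop 1)
  set x₀ : ℝ := max x₀' 1 with hx₀def
  have hx₀1 : (1:ℝ) ≤ x₀ := le_max_right _ _
  have gap1 : ∀ y, x₀ ≤ y → 1 ≤ g y - h y := fun y hy =>
    hx₀' y ((le_max_left _ _).trans hy)
  -- σ₀ := inf of h y / (y - x₀) over y > x₀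
  set S : Set ℝ := {r : ℝ | ∃ y, x₀ < y ∧ r = h y / (y - x₀)} with hSdef
  have hSne : S.Nonempty := ⟨h (x₀ + 1) / (x₀ + 1 - x₀), ⟨x₀ + 1, by linarith, rfl⟩⟩
  have hSbdd : BddBelow S := by
    refine ⟨0, ?_⟩
    rintro r ⟨y, hy, rfl⟩
    have hy0 : (0:ℝ) ≤ y := by linarith
    exact div_nonneg (hh0 y hy0) (by linarith)
  set σ₀ : ℝ := sInf S with hσdef
  have hσ0 : 0 ≤ σ₀ := by
    apply le_csInf hSne
    rintro r ⟨y, hy, rfl⟩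
    exact div_nonneg (hh0 y (show (0:ℝ) ≤ y by linarith)) (by linarith)
  have hσle : ∀ t, x₀ < t → σ₀ * (t - x₀) ≤ h t := by
    intro t ht
    have h1 : σ₀ ≤ h t / (t - x₀) := csInf_le hSbdd ⟨t, ht, rfl⟩
    have h2 : (0:ℝ) < t - x₀ := by linarith
    calc σ₀ * (t - x₀) ≤ (h t / (t - x₀)) * (t - x₀) := by
          exact mul_le_mul_of_nonneg_right h1 h2.le
      _ = h t := by field_simp
  -- choose X with gap ≥ G beyond X
  set G : ℝ := σ₀ * x₀ + C' + 2 with hGdef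
  obtain ⟨X', hX'⟩ := Filter.eventually_atTop.mp (hgap.eventually_ge_atTop G)
  set X : ℝ := max (max X' M) (2 * x₀) with hXdef
  have hXM : M ≤ X := (le_max_right X' M).trans (le_max_left _ _)
  have hX2x₀ : 2 * x₀ ≤ X := le_max_right _ _
  have hXpos : (0:ℝ) < X := by linarith
  have gapG : ∀ y, X ≤ y → G ≤ g y - h y := fun y hy =>
    hX' y (((le_max_left X' M).trans (le_max_left _ _)).trans hy)
  set ε : ℝ := 1 / (4 * X) with hεdef
  have hεpos : 0 < ε := by positivity
  have hε2X : ε * (2 * X) = 1 / 2 := by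
    rw [hεdef]; field_simp; ring
  set s : ℝ := σ₀ + ε with hsdef
  have hspos : 0 < s := by positivity
  set ℓ : ℝ → ℝ := fun y => s * (y - x₀) with hℓdef
  -- the line is below g on [0, 2X]
  have hℓle2X : ∀ y, 0 ≤ y → y ≤ 2 * X → ℓ y ≤ g y := by
    intro y hy0 hy2X
    rcases le_or_gt y x₀ with hcase | hcase
    · have : ℓ y ≤ 0 := mul_nonpos_of_nonneg_of_nonpos hspos.le (by linarith)
      exact this.trans (hg_nonneg y hy0)
    · have h1 : σ₀ * (y - x₀) ≤ h y := hσle y hcase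
      have h2 : ε * (y - x₀) ≤ ε * (2 * X) :=
        mul_le_mul_of_nonneg_left (by linarith) hεpos.le
      have h3 : 1 ≤ g y - h y := gap1 y hcase.le
      have : ℓ y = σ₀ * (y - x₀) + ε * (y - x₀) := by rw [hℓdef]; ring
      rw [this]
      linarith [hε2X]
  -- there is a violation point beyond 2X
  have hviol : ∃ Y, 2 * X < Y ∧ g Y < ℓ Y := by
    by_contra hno
    push_neg at hno
    have hℓle : ∀ y ∈ Set.Ici (0:ℝ), ℓ y ≤ g y := by
      intro y hy
      rcases le_or_gt y (2 * X) with hc | hc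
      · exact hℓle2X y hy hc
      · exact hno y hc
    -- φ = max(h, ℓ) is a convex monotone minorant of g
    have hℓconv : ConvexOn ℝ (Set.Ici 0) ℓ := by
      refine ⟨convex_Ici 0, ?_⟩
      intro x _ y _ a b ha hb hab
      apply le_of_eq
      simp only [hℓdef, smul_eq_mul]
      linear_combination (s * x₀) * hab
    have hℓmono : MonotoneOn ℓ (Set.Ici 0) := by
      intro a _ b _ hab
      exact mul_le_mul_of_nonneg_left (by linarith) hspos.le
    have hφconv : ConvexOn ℝ (Set.Ici 0) (fun y => max (h y) (ℓ y)) :=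
      hh_conv.sup hℓconv
    have hφmono : MonotoneOn (fun y => max (h y) (ℓ y)) (Set.Ici 0) := by
      intro a ha b hb hab
      exact max_le_max (hh_mono ha hb hab) (hℓmono ha hb hab)
    have hφle : ∀ x ∈ Set.Ici (0:ℝ), max (h x) (ℓ x) ≤ g x := fun x hx =>
      max_le (hh_le x hx) (hℓle x hx)
    -- but ℓ exceeds h somewhere
    obtain ⟨r, hrS, hrlt⟩ := exists_lt_of_csInf_lt hSne
      (show sInf S < s by rw [← hσdef]; linarith)
    obtain ⟨y₁, hy₁, rfl⟩ := hrS
    have hy₁0 : (0:ℝ) ≤ y₁ := by linarith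
    have hylt : h y₁ < ℓ y₁ := by
      have h2 : (0:ℝ) < y₁ - x₀ := by linarith
      have h4 := (div_lt_iff₀ h2).mp hrlt
      show h y₁ < s * (y₁ - x₀)
      linarith
    have := hh_max _ hφconv hφmono hφle y₁ hy₁0
    have h3 : ℓ y₁ ≤ max (h y₁) (ℓ y₁) := le_max_right _ _
    linarith
  obtain ⟨Y, hY2X, hYg⟩ := hviol
  have hYpos : 0 < Y := by linarith
  -- find j with X ≤ Y / 2^j < 2X
  have hPex : ∃ n : ℕ, Y < 2 ^ (n + 1) * X := by
    obtain ⟨n, hn⟩ := pow_unbounded_of_one_lt Y (one_lt_two (α := ℝ))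
    refine ⟨n, hn.trans_le ?_⟩
    have h1 : (2:ℝ) ^ n ≤ 2 ^ (n + 1) := by
      apply pow_le_pow_right₀ (by norm_num); omega
    nlinarith [pow_pos (show (0:ℝ) < 2 by norm_num) (n + 1), hX2x₀, hx₀1]
  set j : ℕ := Nat.find hPex with hjdef
  have hjspec : Y < 2 ^ (j + 1) * X := Nat.find_spec hPex
  have hjlb : 2 ^ j * X ≤ Y := by
    rcases Nat.eq_zero_or_pos j with hj0 | hjpos
    · rw [hj0]; norm_num; nlinarith
    · have hmin := Nat.find_min hPex (show j - 1 < j by omega)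
      push_neg at hmin
      have : j - 1 + 1 = j := by omega
      rwa [this] at hmin
  have hpowpos : (0:ℝ) < 2 ^ j := pow_pos (by norm_num) j
  set t : ℝ := Y / 2 ^ j with htdef
  have htX : X ≤ t := by
    rw [htdef, le_div_iff₀ hpowpos]
    linarith [hjlb]
  have ht2X : t < 2 * X := by
    rw [htdef, div_lt_iff₀ hpowpos]
    have : (2:ℝ) ^ (j + 1) = 2 ^ j * 2 := by ring
    nlinarith [hjspec]
  -- descend the violation down to t
  have hchain : ∀ i : ℕ, i ≤ j → g (Y / 2 ^ i) ≤ g Y / 2 ^ i + C' := by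
    intro i hij
    induction i with
    | zero => simp; linarith
    | succ i ih =>
      have hij' : i ≤ j := by omega
      have hprev := ih hij'
      have hm : M ≤ Y / 2 ^ (i + 1) := by
        have h1 : (2:ℝ) ^ (i + 1) ≤ 2 ^ j :=
          pow_le_pow_right₀ (by norm_num) hij
        have h2 : (0:ℝ) < 2 ^ (i + 1) := pow_pos (by norm_num) _
        have h3 : Y / 2 ^ j ≤ Y / 2 ^ (i + 1) := by
          apply div_le_div_of_nonneg_left hYpos.le h2 h1
        linarith [htX]
      have hApp := hA (Y / 2 ^ (i + 1)) hm
      have h2m : 2 * (Y / 2 ^ (i + 1)) = Y / 2 ^ i := by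
        have : (2:ℝ) ^ (i + 1) = 2 ^ i * 2 := by ring
        rw [this]
        field_simp
      rw [h2m] at hApp
      have hsplit : g Y / 2 ^ (i + 1) = (g Y / 2 ^ i) / 2 := by
        have : (2:ℝ) ^ (i + 1) = 2 ^ i * 2 := by ring
        rw [this]
        field_simp
      rw [hsplit]
      linarith
  have hct := hchain j le_rfl
  -- final contradiction at t
  have hgapt : G ≤ g t - h t := gapG t htX
  have hdiv : g Y / 2 ^ j < s * (Y - x₀) / 2 ^ j := by
    have hYg' : g Y < s * (Y - x₀) := hYg
    exact div_lt_div_of_pos_right hYg' hpowpos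
  have hx₀t : x₀ < t := by linarith
  have h5 : σ₀ * (t - x₀) ≤ h t := hσle t hx₀t
  have h6 : ε * t ≤ 1 / 2 := by
    calc ε * t ≤ ε * (2 * X) := mul_le_mul_of_nonneg_left ht2X.le hεpos.le
      _ = 1 / 2 := hε2X
  have h7 : s * (Y - x₀) / 2 ^ j ≤ s * Y / 2 ^ j := by
    have h7a : s * (Y - x₀) ≤ s * Y :=
      mul_le_mul_of_nonneg_left (by linarith) hspos.le
    exact div_le_div_of_nonneg_right h7a hpowpos.le
  have h8 : s * Y / 2 ^ j = s * t := by rw [htdef]; ring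
  have h9 : s * t = σ₀ * (t - x₀) + σ₀ * x₀ + ε * t := by rw [hsdef]; ring
  rw [← htdef] at hct
  rw [hGdef] at hgapt
  linarith
end

section
/- Let X, Y be i.i.d. nonnegative random variables with unbounded support, g(x) = -log P(X > x), and let h be the convex minorant of g. If g - h tends to infinity, then limsup_{m→∞} P(X+Y > 2m)/(P(X>m)²) = ∞. -/
open MeasureTheory ProbabilityTheory Filter

private lemma dyadic_bound (f : ℝ → ℝ) (M ε : ℝ) (hε : 0 ≤ ε)
    (hmid : ∀ x y, M ≤ x → M ≤ y → f ((x + y)/2) ≤ (f x + f y)/2 + ε) :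
    ∀ n : ℕ, ∀ k : ℕ, k ≤ 2^n → ∀ a b : ℝ, M ≤ a → M ≤ b →
      f (((k:ℝ)/2^n) * a + (1 - (k:ℝ)/2^n) * b)
        ≤ ((k:ℝ)/2^n) * f a + (1 - (k:ℝ)/2^n) * f b + 2*ε := by
  intro n
  induction n with
  | zero =>
      intro k hk a b ha hb
      interval_cases k
      · norm_num; linarith
      · norm_num; linarith
  | succ n ih =>
      intro k hk a b ha hb
      have h2 : (2:ℝ)^(n+1) = 2 * 2^n := by ring
      have h2n : (0:ℝ) < 2^n := by positivity
      rcases le_or_gt k (2^n) with hk2 | hk2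
      · have ihk := ih k hk2 a b ha hb
        have hs0 : (0:ℝ) ≤ (k:ℝ)/2^n := by positivity
        have hs1 : (k:ℝ)/2^n ≤ 1 := by
          rw [div_le_one h2n]
          exact_mod_cast hk2
        have hxs : M ≤ ((k:ℝ)/2^n) * a + (1 - (k:ℝ)/2^n) * b := by
          nlinarith [mul_nonneg hs0 (sub_nonneg.mpr ha),
            mul_nonneg (sub_nonneg.mpr hs1) (sub_nonneg.mpr hb)]
        have h1 := hmid b (((k:ℝ)/2^n) * a + (1 - (k:ℝ)/2^n) * b) hb hxs
        have e1 : ((k:ℝ)/2^(n+1)) * a + (1 - (k:ℝ)/2^(n+1)) * b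
            = (b + (((k:ℝ)/2^n) * a + (1 - (k:ℝ)/2^n) * b))/2 := by
          rw [h2]; field_simp; ring
        have e3 : ((k:ℝ)/2^(n+1)) = ((k:ℝ)/2^n)/2 := by
          rw [div_div, ← pow_succ]
        rw [e1, e3]
        linarith
      · have hk2' : k - 2^n ≤ 2^n := by
          have h2' : 2^(n+1) = 2^n + 2^n := by ring
          omega
        have hc : ((k - 2^n : ℕ):ℝ) = (k:ℝ) - 2^n := by
          push_cast [Nat.cast_sub hk2.le]
          ring
        have ihk := ih (k - 2^n) hk2' a b ha hb
        rw [hc] at ihk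
        have hs0 : (0:ℝ) ≤ ((k:ℝ) - 2^n)/2^n := by
          apply div_nonneg _ h2n.le
          have : (2:ℝ)^n ≤ (k:ℝ) := by exact_mod_cast hk2.le
          linarith
        have hs1 : ((k:ℝ) - 2^n)/2^n ≤ 1 := by
          rw [div_le_one h2n]
          have : (k:ℝ) ≤ 2^(n+1) := by exact_mod_cast hk
          linarith [h2]
        have hxs : M ≤ (((k:ℝ)-2^n)/2^n) * a + (1 - ((k:ℝ)-2^n)/2^n) * b := by
          nlinarith [mul_nonneg hs0 (sub_nonneg.mpr ha),
            mul_nonneg (sub_nonneg.mpr hs1) (sub_nonneg.mpr hb)]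
        have h1 := hmid a ((((k:ℝ)-2^n)/2^n) * a + (1 - ((k:ℝ)-2^n)/2^n) * b) ha hxs
        have e1 : ((k:ℝ)/2^(n+1)) * a + (1 - (k:ℝ)/2^(n+1)) * b
            = (a + ((((k:ℝ)-2^n)/2^n) * a + (1 - ((k:ℝ)-2^n)/2^n) * b))/2 := by
          rw [h2]; field_simp; ring
        have e3 : ((k:ℝ)/2^(n+1)) = (((k:ℝ)-2^n)/2^n + 1)/2 := by
          have e : ((k:ℝ)-2^n)/2^n + 1 = (k:ℝ)/2^n := by field_simp; ring
          rw [e, div_div, ← pow_succ]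
        rw [e1, e3]
        linarith

private lemma approx_convex (f : ℝ → ℝ) (hf : Monotone f) (M ε : ℝ) (hε : 0 ≤ ε)
    (hmid : ∀ x y, M ≤ x → M ≤ y → f ((x + y)/2) ≤ (f x + f y)/2 + ε)
    (t a b : ℝ) (ha : M ≤ a) (hb : M ≤ b) (hab : a ≤ b) (ht0 : 0 ≤ t) (ht1 : t ≤ 1) :
    f (t*a + (1-t)*b) ≤ t * f a + (1-t) * f b + 2*ε := by
  rcases eq_or_lt_of_le hab with rfl | hab'
  · have e : t*a + (1-t)*a = a := by ring
    rw [e]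
    nlinarith [hε]
  · apply le_of_forall_pos_le_add
    intro δ hδ
    have hfab : f a ≤ f b := hf hab
    obtain ⟨n, hn⟩ := pow_unbounded_of_one_lt ((f b - f a)/δ) (one_lt_two (α := ℝ))
    have h2n : (0:ℝ) < 2^n := by positivity
    have hdn : f b - f a < δ * 2^n := by
      rw [div_lt_iff₀ hδ] at hn; linarith [hn]
    set k := ⌊t * 2^n⌋₊ with hkdef
    have hk0 : (0:ℝ) ≤ t*2^n := by positivity
    have hkle : (k:ℝ) ≤ t * 2^n := Nat.floor_le hk0
    have hklt : t * 2^n < (k:ℝ) + 1 := Nat.lt_floor_add_one _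
    have hk2 : k ≤ 2^n := by
      have h1 : (k:ℝ) ≤ ((2^n : ℕ):ℝ) := by push_cast; nlinarith
      exact_mod_cast h1
    have key := dyadic_bound f M ε hε hmid n k hk2 a b ha hb
    have hq0 : (0:ℝ) ≤ (k:ℝ)/2^n := by positivity
    have hqt : (k:ℝ)/2^n ≤ t := by rw [div_le_iff₀ h2n]; linarith
    have htq : t - (k:ℝ)/2^n ≤ 1/2^n := by
      rw [sub_le_iff_le_add]
      rw [← add_div] at *
      rw [le_div_iff₀ h2n]
      linarith
    have hmono : t*a + (1-t)*b ≤ ((k:ℝ)/2^n)*a + (1 - (k:ℝ)/2^n)*b := by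
      nlinarith [mul_le_mul_of_nonneg_right (sub_nonneg.mpr hqt) (sub_nonneg.mpr hab'.le)]
    have h1 : f (t*a+(1-t)*b) ≤ f (((k:ℝ)/2^n)*a + (1 - (k:ℝ)/2^n)*b) := hf hmono
    have hA : (t - (k:ℝ)/2^n) * (f b - f a) ≤ (1/2^n) * (f b - f a) :=
      mul_le_mul_of_nonneg_right htq (by linarith)
    have hB : (1/2^n) * (f b - f a) < δ := by
      rw [div_mul_eq_mul_div, one_mul, div_lt_iff₀ h2n]
      linarith
    nlinarith [h1, key, hA, hB]
/-- Let `X, Y` be i.i.d. nonnegative random variables with unbounded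
support, `g(x) = -log P(X > x)`, and `h` the convex minorant of `g`.  If `g - h → ∞` then
`limsup_{m→∞} P(X+Y > 2m)/P(X>m)² = ∞`. -/
theorem stmt_10 {Ω : Type*} [MeasurableSpace Ω] (P : Measure Ω) [IsProbabilityMeasure P]
    (X Y : Ω → ℝ) (hXm : Measurable X) (hYm : Measurable Y)
    (hXY : IndepFun X Y P) (hid : IdentDistrib X Y P P)
    (hX0 : ∀ ω, 0 ≤ X ω) (hY0 : ∀ ω, 0 ≤ Y ω)
    (hXu : ∀ m : ℝ, 0 < P {ω | X ω > m})
    (g h : ℝ → ℝ)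
    (hg : ∀ x : ℝ, g x = -Real.log (P {ω | X ω > x}).toReal)
    (hh_conv : ConvexOn ℝ (Set.Ici 0) h) (hh_mono : MonotoneOn h (Set.Ici 0))
    (hh_le : ∀ x ∈ Set.Ici (0:ℝ), h x ≤ g x)
    (hh_max : ∀ h' : ℝ → ℝ, ConvexOn ℝ (Set.Ici 0) h' → MonotoneOn h' (Set.Ici 0) →
      (∀ x ∈ Set.Ici (0:ℝ), h' x ≤ g x) → ∀ x ∈ Set.Ici (0:ℝ), h' x ≤ h x)
    (hgap : Filter.Tendsto (fun x => g x - h x) Filter.atTop Filter.atTop) :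
    Filter.limsup
      (fun m : ℝ => P {ω | X ω + Y ω > 2 * m} / (P {ω | X ω > m}) ^ 2)
      Filter.atTop = ⊤ := by
  by_contra h0
  have hlim : Filter.limsup
      (fun m : ℝ => P {ω | X ω + Y ω > 2 * m} / (P {ω | X ω > m}) ^ 2)
      Filter.atTop < ⊤ := lt_top_iff_ne_top.mpr h0
  set L := Filter.limsup
      (fun m : ℝ => P {ω | X ω + Y ω > 2 * m} / (P {ω | X ω > m}) ^ 2)
      Filter.atTop with hLdef
  have hB : ∀ᶠ m in atTop,
      P {ω | X ω + Y ω > 2 * m} / (P {ω | X ω > m}) ^ 2 < L + 1 :=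
    eventually_lt_of_limsup_lt (ENNReal.lt_add_right hlim.ne one_ne_zero)
  obtain ⟨M₀, hM₀⟩ := eventually_atTop.mp hB
  -- basic facts
  have hne : ∀ t : ℝ, P {ω | X ω > t} ≠ 0 := fun t => (hXu t).ne'
  have hfin : ∀ t : ℝ, P {ω | X ω > t} ≠ ⊤ := fun t => measure_ne_top P _
  have hpos : ∀ t : ℝ, 0 < (P {ω | X ω > t}).toReal :=
    fun t => ENNReal.toReal_pos (hne t) (hfin t)
  have hanti : ∀ s t : ℝ, s ≤ t →
      (P {ω | X ω > t}).toReal ≤ (P {ω | X ω > s}).toReal := by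
    intro s t hst
    refine ENNReal.toReal_mono (hfin s) (measure_mono ?_)
    intro ω hω
    simp only [Set.mem_setOf_eq] at *
    linarith
  have hgmono : Monotone g := by
    intro s t hst
    rw [hg, hg]
    have := Real.log_le_log (hpos t) (hanti s t hst)
    linarith
  have hL1top : L + 1 ≠ ⊤ := ENNReal.add_ne_top.mpr ⟨hlim.ne, ENNReal.one_ne_top⟩
  set Bp : ℝ := max 1 (L+1).toReal with hBpdef
  have hBp1 : (1:ℝ) ≤ Bp := le_max_left _ _
  set ε : ℝ := Real.log Bp / 2 with hεdef
  have hε : 0 ≤ ε := by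
    have := Real.log_nonneg hBp1
    rw [hεdef]; linarith
  -- key probabilistic inequality
  have hkey : ∀ a b : ℝ, M₀ ≤ (a+b)/2 →
      (P {ω | X ω > a}).toReal * (P {ω | X ω > b}).toReal
        ≤ Bp * (P {ω | X ω > (a+b)/2}).toReal ^ 2 := by
    intro a b hm
    set m := (a+b)/2 with hmdef
    have hsub : {ω | X ω > a} ∩ {ω | Y ω > b} ⊆ {ω | X ω + Y ω > 2*m} := by
      rintro ω ⟨h1, h2⟩
      simp only [Set.mem_setOf_eq] at h1 h2 ⊢
      have hab : a + b = 2*m := by rw [hmdef]; ring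
      linarith
    have hindep : P ({ω | X ω > a} ∩ {ω | Y ω > b})
        = P {ω | X ω > a} * P {ω | Y ω > b} :=
      hXY.measure_inter_preimage_eq_mul (Set.Ioi a) (Set.Ioi b)
        measurableSet_Ioi measurableSet_Ioi
    have hidb : P {ω | Y ω > b} = P {ω | X ω > b} :=
      (hid.measure_mem_eq (measurableSet_Ioi (a := b))).symm
    have hratio := hM₀ m hm
    rw [ENNReal.div_lt_iff (Or.inl (pow_ne_zero 2 (hne m)))
        (Or.inl (ENNReal.pow_ne_top (hfin m)))] at hratio
    have hchain : P {ω | X ω > a} * P {ω | X ω > b}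
        ≤ (L+1) * P {ω | X ω > m} ^ 2 := by
      calc P {ω | X ω > a} * P {ω | X ω > b}
          = P ({ω | X ω > a} ∩ {ω | Y ω > b}) := by rw [hindep, hidb]
        _ ≤ P {ω | X ω + Y ω > 2*m} := measure_mono hsub
        _ ≤ (L+1) * P {ω | X ω > m} ^ 2 := hratio.le
    have hRfin : (L+1) * P {ω | X ω > m} ^ 2 ≠ ⊤ :=
      ENNReal.mul_ne_top hL1top (ENNReal.pow_ne_top (hfin m))
    have htr := ENNReal.toReal_mono hRfin hchain
    rw [ENNReal.toReal_mul, ENNReal.toReal_mul, ENNReal.toReal_pow] at htr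
    have hBle : (L+1).toReal ≤ Bp := le_max_right _ _
    nlinarith [sq_nonneg ((P {ω | X ω > m}).toReal), htr,
      mul_le_mul_of_nonneg_right hBle (sq_nonneg ((P {ω | X ω > m}).toReal))]
  set M₁ : ℝ := max M₀ 0 with hM₁def
  have hM₁0 : (0:ℝ) ≤ M₁ := le_max_right _ _
  -- approximate midpoint convexity of g
  have hmid : ∀ u v : ℝ, M₁ ≤ u → M₁ ≤ v → g ((u+v)/2) ≤ (g u + g v)/2 + ε := by
    intro u v hu hv
    have hM : M₀ ≤ (u+v)/2 := by
      have h1 : M₀ ≤ M₁ := le_max_left _ _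
      linarith
    have hk := hkey u v hM
    have hBp0 : (0:ℝ) < Bp := by linarith
    have hlog := Real.log_le_log (mul_pos (hpos u) (hpos v)) hk
    rw [Real.log_mul (hpos u).ne' (hpos v).ne',
        Real.log_mul hBp0.ne' (pow_ne_zero 2 (hpos ((u+v)/2)).ne'),
        Real.log_pow] at hlog
    rw [hg, hg, hg]
    push_cast at hlog
    rw [hεdef]
    linarith
  have hfull : ∀ t a b, M₁ ≤ a → M₁ ≤ b → a ≤ b → 0 ≤ t → t ≤ 1 →
      g (t*a + (1-t)*b) ≤ t * g a + (1-t) * g b + 2*ε :=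
    fun t a b ha hb hab ht0 ht1 =>
      approx_convex g hgmono M₁ ε hε hmid t a b ha hb hab ht0 ht1
  set D : ℝ := g M₁ - g 0 with hDdef
  have hD : 0 ≤ D := by
    have := hgmono hM₁0
    rw [hDdef]; linarith
  -- main claim: g - h is bounded on [M₁, ∞)
  have hcl : ∀ x : ℝ, M₁ ≤ x → g x - h x ≤ 2*ε + D := by
    intro x hx
    have hslope : ∀ z' z : ℝ, M₁ ≤ z' → z' < x → x < z →
        (g x - 2*ε - g z') * (z - x) ≤ (g z - g x + 2*ε) * (x - z') := by
      intro z' z hz' hz'x hxz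
      have hzz' : (0:ℝ) < z - z' := by linarith
      set t := (z - x)/(z - z') with htd
      have ht0 : 0 ≤ t := by
        apply div_nonneg _ hzz'.le; linarith
      have ht1 : t ≤ 1 := by
        rw [htd, div_le_one hzz']; linarith
      have hpt : t*z' + (1-t)*z = x := by
        rw [htd]; field_simp; ring
      have hk := hfull t z' z hz' (by linarith) (by linarith) ht0 ht1
      rw [hpt] at hk
      have htm : t * (z - z') = z - x := by
        rw [htd]; field_simp
      have e : (t*g z' + (1-t)*g z + 2*ε)*(z - z')
          = (z-x)*g z' + (x - z')*g z + 2*ε*(z-z') := by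
        linear_combination (g z' - g z) * htm
      have hk2 := mul_le_mul_of_nonneg_right hk hzz'.le
      rw [e] at hk2
      nlinarith [hk2]
    set S : Set ℝ := insert 0 ((fun z => (g x - 2*ε - g z)/(x - z)) '' Set.Ico M₁ x)
      with hSdef
    have hSne : S.Nonempty := ⟨0, Set.mem_insert _ _⟩
    have hub : ∀ z, x < z → ∀ s ∈ S, s ≤ (g z - g x + 2*ε)/(z - x) := by
      intro z hz s hs
      have hzx : (0:ℝ) < z - x := by linarith
      rcases hs with rfl | ⟨z', hz', rfl⟩
      · apply div_nonneg _ hzx.le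
        have := hgmono hz.le
        linarith
      · rw [div_le_div_iff₀ (by linarith [hz'.2] : (0:ℝ) < x - z') hzx]
        exact hslope z' z hz'.1 hz'.2 hz
    have hbdd : BddAbove S :=
      ⟨(g (x+1) - g x + 2*ε)/(x+1-x), fun s hs => hub (x+1) (by linarith) s hs⟩
    set c := sSup S with hcdef
    have hc0 : 0 ≤ c := le_csSup hbdd (Set.mem_insert _ _)
    have hcl' : ∀ z', M₁ ≤ z' → z' < x → (g x - 2*ε - g z')/(x - z') ≤ c :=
      fun z' h1 h2 => le_csSup hbdd (Set.mem_insert_of_mem _ ⟨z', ⟨h1, h2⟩, rfl⟩)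
    have hcu : ∀ z, x < z → c ≤ (g z - g x + 2*ε)/(z - x) :=
      fun z hz => csSup_le hSne (hub z hz)
    have hLM : g x - 2*ε + c*(M₁ - x) ≤ g M₁ := by
      rcases eq_or_lt_of_le hx with rfl | hx'
      · have : c*(M₁ - M₁) = 0 := by ring
        linarith [this, hε]
      · have h1 := hcl' M₁ le_rfl hx'
        rw [div_le_iff₀ (by linarith : (0:ℝ) < x - M₁)] at h1
        nlinarith [h1]
    have hline : ∀ w, 0 ≤ w → g x - 2*ε - D + c*(w - x) ≤ g w := by
      intro w hw
      rcases lt_or_ge w M₁ with hwM | hwM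
      · have h1 : c*(w-x) ≤ c*(M₁ - x) :=
          mul_le_mul_of_nonneg_left (by linarith) hc0
        have h2 : g 0 ≤ g w := hgmono hw
        rw [hDdef]
        linarith [hLM]
      · rcases lt_trichotomy w x with hwx | rfl | hwx
        · have h1 := hcl' w hwM hwx
          rw [div_le_iff₀ (by linarith : (0:ℝ) < x - w)] at h1
          nlinarith [h1]
        · have : c*(w - w) = 0 := by ring
          linarith [this, hε, hD]
        · have h1 := hcu w hwx
          rw [le_div_iff₀ (by linarith : (0:ℝ) < w - x)] at h1
          nlinarith [h1]
    have hconv : ConvexOn ℝ (Set.Ici 0) (fun w => g x - 2*ε - D + c*(w - x)) := by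
      refine ⟨convex_Ici 0, ?_⟩
      intro p _ q _ a b ha hb hab
      simp only [smul_eq_mul]
      have hb1 : b = 1 - a := by linarith
      subst hb1
      exact le_of_eq (by ring)
    have hmono' : MonotoneOn (fun w => g x - 2*ε - D + c*(w - x)) (Set.Ici 0) := by
      intro w1 _ w2 _ h12
      simp only
      have := mul_le_mul_of_nonneg_left (sub_le_sub_right h12 x) hc0
      linarith
    have hhx := hh_max _ hconv hmono' (fun w hw => hline w hw) x
      (Set.mem_Ici.mpr (le_trans hM₁0 hx))
    have : c*(x - x) = 0 := by ring
    linarith [hhx, this]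
  -- contradiction with hgap
  have hev := (hgap.eventually (eventually_ge_atTop (2*ε + D + 1)))
  obtain ⟨N, hN⟩ := eventually_atTop.mp hev
  have hx1 : M₁ ≤ max M₁ N := le_max_left _ _
  have hx2 : N ≤ max M₁ N := le_max_right _ _
  have h1 := hcl (max M₁ N) hx1
  have h2 := hN (max M₁ N) hx2
  linarith
end

section
/- Let g : [0,∞) → [0,∞) be nondecreasing, right-continuous, with g(0)=0 and g(x)→∞, and let h be its convex minorant. Suppose liminf_{x→∞}(g(x)-h(x)) < ∞ and limsup_{x→∞}(g(x)-h(x)) = ∞. Then for every d > 0, limsup_{m→∞} |L^g_{m,d}|_g = ∞, where L^g_{m,d} = {ℓ ∈ [0,2m] : g(ℓ)+g(2m-ℓ) ≤ 2(g(m)+d)} and |·|_g is the g-Lebesgue–Stieltjes measure. -/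
open Filter

/-- **oscillating case.** Let `g` be a nondecreasing right-continuous
(Stieltjes) function, nonnegative on `[0,∞)` with `g 0 = 0` and `g(x) → ∞`, and let `h` be
its convex minorant.  If `liminf_{x→∞}(g-h) < ∞` and `limsup_{x→∞}(g-h) = ∞`, then for every
`d > 0` we have `limsup_{m→∞} |L^g_{m,d}|_g = ∞`, where
`L^g_{m,d} = {ℓ ∈ [0,2m] : g(ℓ)+g(2m-ℓ) ≤ 2(g(m)+d)}` and `|·|_g` is the Lebesgue–Stieltjes
measure of `g`. -/
theorem stmt_11 (g : StieltjesFunction ℝ)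
    (hg_nonneg : ∀ x ∈ Set.Ici (0:ℝ), 0 ≤ g x) (hg0 : g 0 = 0)
    (hg_top : Filter.Tendsto g Filter.atTop Filter.atTop)
    (h : ℝ → ℝ)
    (hh_conv : ConvexOn ℝ (Set.Ici 0) h) (hh_mono : MonotoneOn h (Set.Ici 0))
    (hh_le : ∀ x ∈ Set.Ici (0:ℝ), h x ≤ g x)
    (hh_max : ∀ h' : ℝ → ℝ, ConvexOn ℝ (Set.Ici 0) h' → MonotoneOn h' (Set.Ici 0) →
      (∀ x ∈ Set.Ici (0:ℝ), h' x ≤ g x) → ∀ x ∈ Set.Ici (0:ℝ), h' x ≤ h x)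
    (hliminf : ∃ C : ℝ, ∃ᶠ x in Filter.atTop, g x - h x < C)
    (hlimsup : ∀ C : ℝ, ∃ᶠ x in Filter.atTop, C < g x - h x) :
    ∀ d : ℝ, 0 < d →
      Filter.limsup
        (fun m : ℝ =>
          g.measure {ℓ : ℝ | ℓ ∈ Set.Icc 0 (2 * m) ∧ g ℓ + g (2 * m - ℓ) ≤ 2 * (g m + d)})
        Filter.atTop = ⊤ := by
  intro d hd
  by_contra hlim
  set F : ℝ → ENNReal := fun m : ℝ =>
    g.measure {ℓ : ℝ | ℓ ∈ Set.Icc 0 (2 * m) ∧ g ℓ + g (2 * m - ℓ) ≤ 2 * (g m + d)} with hFdef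
  have hne : limsup F atTop ≠ ⊤ := hlim
  set c : ENNReal := limsup F atTop + 1 with hcdef
  have hc_ne : c ≠ ⊤ := by
    rw [hcdef]
    exact ENNReal.add_ne_top.2 ⟨hne, ENNReal.one_ne_top⟩
  have hlt : limsup F atTop < c := ENNReal.lt_add_right hne one_ne_zero
  have hev : ∀ᶠ m in atTop, F m < c := Filter.eventually_lt_of_limsup_lt hlt
  obtain ⟨M, hM⟩ := Filter.eventually_atTop.1 hev
  set K : ℝ := c.toReal with hKdef
  have hK0 : 0 ≤ K := ENNReal.toReal_nonneg
  set M₀ : ℝ := max M 0 with hM₀def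
  have hM₀0 : (0:ℝ) ≤ M₀ := le_max_right M 0
  have hM₀M : M ≤ M₀ := le_max_left M 0
  -- Key lemma: if [a,m] sits inside L_{m,d} with m ≥ M, the g-increment over [a,m] is ≤ K.
  have key : ∀ a m : ℝ, M ≤ m → 0 ≤ a → a ≤ m →
      (∀ ℓ : ℝ, a ≤ ℓ → ℓ ≤ m → g ℓ + g (2 * m - ℓ) ≤ 2 * (g m + d)) →
      g m - g a ≤ K := by
    intro a m hMm ha ham hcond
    have hsub : Set.Icc a m ⊆
        {ℓ : ℝ | ℓ ∈ Set.Icc 0 (2 * m) ∧ g ℓ + g (2 * m - ℓ) ≤ 2 * (g m + d)} := by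
      intro ℓ hℓ
      rcases hℓ with ⟨h1, h2⟩
      refine ⟨?_, hcond ℓ h1 h2⟩
      constructor
      · linarith
      · linarith
    have h1 : g.measure (Set.Icc a m) ≤ F m := by
      rw [hFdef]
      exact MeasureTheory.measure_mono hsub
    have h2 : F m < c := hM m hMm
    have h3 : ENNReal.ofReal (g m - Function.leftLim g a) ≤ c := by
      rw [← g.measure_Icc]
      exact le_of_lt (lt_of_le_of_lt h1 h2)
    have h4 : g m - Function.leftLim g a ≤ K := by
      rw [hKdef]
      exact (ENNReal.ofReal_le_iff_le_toReal hc_ne).1 h3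
    have h5 : Function.leftLim g a ≤ g a := g.mono.leftLim_le le_rfl
    linarith
  -- Chord bound: chords of g over [u,w] with u ≥ M₀ dip at most K + 2d below g.
  have chord : ∀ u w y : ℝ, M₀ ≤ u → u < w → u ≤ y → y ≤ w →
      (g y - g u) * (w - u) - (g w - g u) * (y - u) ≤ (K + 2 * d) * (w - u) := by
    intro u w y huM huw huy hyw
    have hwu : (0:ℝ) < w - u := by linarith
    set σ : ℝ := (g w - g u) / (w - u) with hσdef
    have hσ0 : 0 ≤ σ := div_nonneg (by linarith [g.mono huw.le]) hwu.le
    set f : ℝ → ℝ := fun x => g x - (g u + σ * (x - u)) with hfdef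
    have hσwu : σ * (w - u) = g w - g u := by
      rw [hσdef]
      exact div_mul_cancel₀ _ hwu.ne'
    have hfw : f w = 0 := by
      simp only [hfdef]
      linarith [hσwu]
    have himg : (f '' Set.Icc u w).Nonempty :=
      ⟨f u, ⟨u, ⟨le_rfl, huw.le⟩, rfl⟩⟩
    have hbd : BddAbove (f '' Set.Icc u w) := by
      refine ⟨g w - g u, ?_⟩
      rintro _ ⟨x, hx, rfl⟩
      have h1 : g x ≤ g w := g.mono hx.2
      have h2 : 0 ≤ σ * (x - u) := mul_nonneg hσ0 (by linarith [hx.1])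
      simp only [hfdef]
      linarith
    set S : ℝ := sSup (f '' Set.Icc u w) with hSdef
    have hfleS : ∀ x : ℝ, u ≤ x → x ≤ w → f x ≤ S := by
      intro x h1 h2
      exact le_csSup hbd ⟨x, ⟨h1, h2⟩, rfl⟩
    have hSK : S ≤ K + 2 * d := by
      obtain ⟨-, ⟨m, hm, rfl⟩, hfm⟩ :=
        exists_lt_of_lt_csSup himg (show S - d < S by linarith)
      have hmu : u ≤ m := hm.1
      have hmw : m ≤ w := hm.2
      set ℓ₀ : ℝ := max u (2 * m - w) with hℓ₀def
      have hℓ₀u : u ≤ ℓ₀ := le_max_left _ _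
      have hℓ₀r : 2 * m - w ≤ ℓ₀ := le_max_right _ _
      have hℓ₀m : ℓ₀ ≤ m := max_le hmu (by linarith)
      have hcond : ∀ ℓ : ℝ, ℓ₀ ≤ ℓ → ℓ ≤ m → g ℓ + g (2 * m - ℓ) ≤ 2 * (g m + d) := by
        intro ℓ h1 h2
        have hℓu : u ≤ ℓ := le_trans hℓ₀u h1
        have hℓw : ℓ ≤ w := le_trans h2 hmw
        have hrl : u ≤ 2 * m - ℓ := by linarith
        have hrw : 2 * m - ℓ ≤ w := by linarith [le_trans hℓ₀r h1]
        have e1 : f ℓ ≤ S := hfleS _ hℓu hℓw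
        have e2 : f (2 * m - ℓ) ≤ S := hfleS _ hrl hrw
        have lam : σ * (ℓ - u) + σ * ((2 * m - ℓ) - u) = 2 * (σ * (m - u)) := by ring
        simp only [hfdef] at e1 e2 hfm
        linarith
      have hmM : M ≤ m := le_trans (le_trans hM₀M huM) hmu
      have h0ℓ₀ : 0 ≤ ℓ₀ := le_trans (le_trans hM₀0 huM) hℓ₀u
      have hkey := key ℓ₀ m hmM h0ℓ₀ hℓ₀m hcond
      rcases le_total (2 * m - w) u with hcase | hcase
      · -- ℓ₀ = u
        have hℓeq : ℓ₀ = u := max_eq_left hcase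
        rw [hℓeq] at hkey
        have h6 : 0 ≤ σ * (m - u) := mul_nonneg hσ0 (by linarith)
        have h7 : f m ≤ K := by
          simp only [hfdef]
          linarith
        linarith
      · -- ℓ₀ = 2m - w
        have hℓeq : ℓ₀ = 2 * m - w := max_eq_right hcase
        have hfℓ₀ : f ℓ₀ ≤ S := hfleS _ hℓ₀u (by rw [hℓeq]; linarith)
        have hr1 : f m - f ℓ₀ + σ * (w - m) = g m - g ℓ₀ := by
          simp only [hfdef]
          rw [hℓeq]
          ring
        have h7 : σ * (w - m) ≤ K + d := by linarith
        have hr2 : f w - f m + σ * (w - m) = g w - g m := by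
          simp only [hfdef]
          ring
        have h8 : g m ≤ g w := g.mono hmw
        linarith
    have hfyS : f y ≤ S := hfleS y huy hyw
    have hfy : f y ≤ K + 2 * d := le_trans hfyS hSK
    have hmul := mul_le_mul_of_nonneg_right hfy hwu.le
    have hexp : (g y - (g u + σ * (y - u))) * (w - u)
        = (g y - g u) * (w - u) - σ * (y - u) * (w - u) := by ring
    have hσyu : σ * (y - u) * (w - u) = (g w - g u) * (y - u) := by
      calc σ * (y - u) * (w - u) = σ * (w - u) * (y - u) := by ring
        _ = (g w - g u) * (y - u) := by rw [hσwu]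
    simp only [hfdef] at hmul
    nlinarith [hmul, hexp, hσyu]
  -- Cross inequality between left and right difference quotients at y.
  set β : ℝ := K + 2 * d with hβdef
  have hβ0 : 0 ≤ β := by rw [hβdef]; linarith
  have cross : ∀ u w y : ℝ, M₀ ≤ u → u < y → y < w →
      (g y - β - g u) * (w - y) ≤ (g w - g y + β) * (y - u) := by
    intro u w y hu huy hyw
    have hch := chord u w y hu (by linarith) (by linarith) (by linarith)
    have hexp : (g y - β - g u) * (w - y) - (g w - g y + β) * (y - u)
        = (g y - g u) * (w - u) - (g w - g u) * (y - u) - (K + 2 * d) * (w - u) := by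
      rw [hβdef]; ring
    linarith
  -- Pick an excursion point y with g y - h y > β + g M₀.
  obtain ⟨y, hy2, hy1⟩ :=
    ((hlimsup (β + g M₀)).and_eventually (Filter.eventually_ge_atTop (M₀ + 1))).exists
  have hM₀y : M₀ < y := by linarith
  -- Build an affine minorant of g on [M₀, ∞) nearly touching g at y.
  set sl : ℝ → ℝ := fun u => (g y - β - g u) / (y - u) with hsldef
  have hne2 : (sl '' Set.Ico M₀ y).Nonempty := ⟨sl M₀, ⟨M₀, ⟨le_rfl, hM₀y⟩, rfl⟩⟩
  have hub : ∀ w : ℝ, y < w → ∀ z ∈ sl '' Set.Ico M₀ y, z ≤ (g w - g y + β) / (w - y) := by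
    rintro w hw _ ⟨u, hu, rfl⟩
    rw [hsldef]
    rw [div_le_div_iff₀ (by linarith [hu.2] : (0:ℝ) < y - u) (by linarith : (0:ℝ) < w - y)]
    exact cross u w y hu.1 hu.2 hw
  have hbdd2 : BddAbove (sl '' Set.Ico M₀ y) :=
    ⟨(g (y + 1) - g y + β) / (y + 1 - y), fun z hz => hub (y + 1) (by linarith) z hz⟩
  set s0 : ℝ := sSup (sl '' Set.Ico M₀ y) with hs0def
  set s : ℝ := max s0 0 with hsdef
  have hs0 : 0 ≤ s := le_max_right _ _
  have hsle : ∀ w : ℝ, y < w → s * (w - y) ≤ g w - g y + β := by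
    intro w hw
    have h1 : s0 ≤ (g w - g y + β) / (w - y) := csSup_le hne2 (fun z hz => hub w hw z hz)
    have h2 : (0:ℝ) ≤ (g w - g y + β) / (w - y) :=
      div_nonneg (by linarith [g.mono hw.le]) (by linarith)
    have h3 : s ≤ (g w - g y + β) / (w - y) := max_le h1 h2
    have h4 := mul_le_mul_of_nonneg_right h3 (by linarith : (0:ℝ) ≤ w - y)
    calc s * (w - y) ≤ (g w - g y + β) / (w - y) * (w - y) := h4
      _ = g w - g y + β := div_mul_cancel₀ _ (by linarith : (0:ℝ) < w - y).ne'
  have hsge : ∀ u : ℝ, M₀ ≤ u → u < y → g y - β - g u ≤ s * (y - u) := by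
    intro u h1 h2
    have h3 : sl u ≤ s0 := le_csSup hbdd2 ⟨u, ⟨h1, h2⟩, rfl⟩
    have h4 : sl u ≤ s := le_trans h3 (le_max_left _ _)
    have h5 := mul_le_mul_of_nonneg_right h4 (by linarith : (0:ℝ) ≤ y - u)
    have h6 : sl u * (y - u) = g y - β - g u := by
      rw [hsldef]
      exact div_mul_cancel₀ _ (by linarith : (0:ℝ) < y - u).ne'
    linarith
  set A : ℝ → ℝ := fun x => g y - β + s * (x - y) with hAdef
  have hAle : ∀ x : ℝ, M₀ ≤ x → A x ≤ g x := by
    intro x hx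
    rcases lt_trichotomy x y with hxy | hxy | hxy
    · have h1 := hsge x hx hxy
      have h2 : s * (x - y) = -(s * (y - x)) := by ring
      simp only [hAdef]
      linarith
    · subst hxy
      simp only [hAdef]
      simp
      linarith
    · have h1 := hsle x hxy
      simp only [hAdef]
      linarith
  -- The hockey-stick convex monotone minorant.
  set h' : ℝ → ℝ := fun x => max (A x - g M₀) 0 with hh'def
  have hgM₀ : 0 ≤ g M₀ := hg_nonneg M₀ hM₀0
  have hAmono : Monotone A := by
    intro p q hpq
    simp only [hAdef]
    nlinarith [mul_le_mul_of_nonneg_left hpq hs0]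
  have hconv' : ConvexOn ℝ (Set.Ici 0) h' := by
    have c1 : ConvexOn ℝ (Set.Ici (0:ℝ)) (fun x => A x - g M₀) := by
      refine ⟨convex_Ici 0, ?_⟩
      intro p _ q _ a b ha hb hab
      have hb1 : b = 1 - a := by linarith
      subst hb1
      simp only [hAdef, smul_eq_mul]
      apply le_of_eq
      ring
    have c2 : ConvexOn ℝ (Set.Ici (0:ℝ)) (fun _ : ℝ => (0:ℝ)) :=
      convexOn_const 0 (convex_Ici 0)
    have := c1.sup c2
    simpa [hh'def, Pi.sup_def] using this
  have hmono' : MonotoneOn h' (Set.Ici 0) := by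
    intro p _ q _ hpq
    simp only [hh'def]
    exact max_le_max (by linarith [hAmono hpq]) le_rfl
  have hle' : ∀ x ∈ Set.Ici (0:ℝ), h' x ≤ g x := by
    intro x hx
    have hgx : 0 ≤ g x := hg_nonneg x hx
    simp only [hh'def]
    apply max_le _ hgx
    rcases le_or_gt M₀ x with hc | hc
    · have := hAle x hc
      linarith
    · have h1 : A x ≤ A M₀ := hAmono hc.le
      have h2 : A M₀ ≤ g M₀ := hAle M₀ le_rfl
      linarith
  have hfin := hh_max h' hconv' hmono' hle' y (by simp only [Set.mem_Ici]; linarith)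
  have h9 : A y - g M₀ ≤ h' y := by
    simp only [hh'def]
    exact le_max_left _ _
  have h10 : A y = g y - β := by
    simp only [hAdef]
    ring
  linarith [hy2]
end

section
/- Let X, Y be independent nonnegative random variables with tail functions F₀(x)=P(X>x), F₁(x)=P(Y>x), and set g₀ = -log F₀, g₁ = -log F₁, g = (g₀+g₁)/2. Define L⁰_{m,d} = {ℓ ∈ [0,2m] : (g₀(ℓ)+g₁(2m-ℓ))/2 ≤ g(m)+d}. Then P(X+Y > 2m) ≥ e^{-2d}·P(X>m)·P(Y>m)·|L⁰_{m,d}|_{g₀}, where |·|_{g₀} is the Lebesgue–Stieltjes measure of g₀. -/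
open MeasureTheory ProbabilityTheory Filter

section Aux

open Set Topology ENNReal

private lemma D_incr (κ : Measure ℝ) (hκ : ∀ a b : ℝ, κ (Set.Ioc a b) ≠ ⊤) {x y : ℝ} (hxy : x ≤ y) :
    ((κ (Set.Ioc 0 y)).toReal - (κ (Set.Ioc y 0)).toReal)
      - ((κ (Set.Ioc 0 x)).toReal - (κ (Set.Ioc x 0)).toReal) = (κ (Set.Ioc x y)).toReal := by
  have addIoc : ∀ a b c : ℝ, a ≤ b → b ≤ c →
      (κ (Set.Ioc a c)).toReal = (κ (Set.Ioc a b)).toReal + (κ (Set.Ioc b c)).toReal := by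
    intro a b c hab hbc
    rw [← Set.Ioc_union_Ioc_eq_Ioc hab hbc,
      measure_union (Set.Ioc_disjoint_Ioc_of_le le_rfl) measurableSet_Ioc,
      ENNReal.toReal_add (hκ a b) (hκ b c)]
  rcases le_total 0 x with h0x | hx0
  · have h1 : Set.Ioc x (0:ℝ) = ∅ := Set.Ioc_eq_empty (by simp; linarith)
    have h2 : Set.Ioc y (0:ℝ) = ∅ := Set.Ioc_eq_empty (by simp; linarith)
    rw [h1, h2, addIoc 0 x y h0x hxy]
    simp
  · rcases le_total 0 y with h0y | hy0
    · have h1 : Set.Ioc (0:ℝ) x = ∅ := Set.Ioc_eq_empty (by simp; linarith)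
      have h2 : Set.Ioc y (0:ℝ) = ∅ := Set.Ioc_eq_empty (by simp; linarith)
      rw [h1, h2, addIoc x 0 y hx0 h0y]
      simp only [measure_empty, ENNReal.toReal_zero]; ring
    · have h1 : Set.Ioc (0:ℝ) x = ∅ := Set.Ioc_eq_empty (by simp; linarith)
      have h2 : Set.Ioc (0:ℝ) y = ∅ := Set.Ioc_eq_empty (by simp; linarith)
      rw [h1, h2, addIoc x y 0 hxy hy0]
      simp only [measure_empty, ENNReal.toReal_zero]; ring

private lemma measure_le_of_forall_Ioc_le {ν ρ : Measure ℝ}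
    (hν : ∀ a b : ℝ, ν (Set.Ioc a b) ≠ ⊤) (hρ : ∀ a b : ℝ, ρ (Set.Ioc a b) ≠ ⊤)
    (hle : ∀ a b : ℝ, ν (Set.Ioc a b) ≤ ρ (Set.Ioc a b)) : ν ≤ ρ := by
  set d : ℝ → ℝ := fun x => ((ρ (Set.Ioc 0 x)).toReal - (ν (Set.Ioc 0 x)).toReal)
      - ((ρ (Set.Ioc x 0)).toReal - (ν (Set.Ioc x 0)).toReal) with hd
  have hincr : ∀ {x y : ℝ}, x ≤ y →
      d y - d x = (ρ (Set.Ioc x y)).toReal - (ν (Set.Ioc x y)).toReal := by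
    intro x y hxy
    have h1 := D_incr ρ hρ hxy
    have h2 := D_incr ν hν hxy
    simp only [hd]
    linarith
  have hmono : Monotone d := by
    intro x y hxy
    have h := hincr hxy
    have : (ν (Set.Ioc x y)).toReal ≤ (ρ (Set.Ioc x y)).toReal :=
      ENNReal.toReal_mono (hρ x y) (hle x y)
    linarith
  have hrc : ∀ x, ContinuousWithinAt d (Set.Ici x) x := by
    intro x
    rw [← continuousWithinAt_Ioi_iff_Ici]
    rw [ContinuousWithinAt, Metric.tendsto_nhdsWithin_nhds]
    intro ε hε
    have htend : Tendsto (fun n : ℕ => ρ (Set.Ioc x (x + 1/(n+1)))) atTop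
        (𝓝 (ρ (⋂ n : ℕ, Set.Ioc x (x + 1/(n+1))))) := by
      refine tendsto_measure_iInter_atTop (fun n => measurableSet_Ioc.nullMeasurableSet) ?_
        ⟨0, hρ _ _⟩
      intro i j hij
      refine Set.Ioc_subset_Ioc_right (by
        have : (1:ℝ)/(j+1) ≤ 1/(i+1) := by
          apply one_div_le_one_div_of_le <;> [positivity; exact_mod_cast by omega]
        linarith)
    have hempty : (⋂ n : ℕ, Set.Ioc x (x + 1/(n+1))) = ∅ := by
      ext y
      simp only [Set.mem_iInter, Set.mem_Ioc, Set.mem_empty_iff_false, iff_false, not_forall]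
      by_contra h
      push_neg at h
      obtain ⟨n, hn⟩ := exists_nat_one_div_lt (sub_pos.2 (h 0).1)
      exact absurd ((h n).2) (by linarith [hn])
    rw [hempty, measure_empty] at htend
    obtain ⟨n, hn⟩ : ∃ n : ℕ, ρ (Set.Ioc x (x + 1/(n+1))) < ENNReal.ofReal ε := by
      have := htend.eventually_lt_const (by simp [hε] : (0:ENNReal) < ENNReal.ofReal ε)
      exact this.exists
    refine ⟨1/(n+1), by positivity, ?_⟩
    intro y hy hdist
    have hxy : x < y := hy
    have hyx : y ≤ x + 1/(n+1) := by
      rw [Real.dist_eq, abs_of_pos (by linarith : (0:ℝ) < y - x)] at hdist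
      linarith
    have h1 : d y - d x ≤ (ρ (Set.Ioc x y)).toReal := by
      have := hincr hxy.le
      have h0 : (0:ℝ) ≤ (ν (Set.Ioc x y)).toReal := ENNReal.toReal_nonneg
      linarith
    have h2 : (ρ (Set.Ioc x y)).toReal ≤ (ρ (Set.Ioc x (x + 1/(n+1)))).toReal :=
      ENNReal.toReal_mono (hρ _ _) (measure_mono (Set.Ioc_subset_Ioc_right hyx))
    have h3 : (ρ (Set.Ioc x (x + 1/(n+1)))).toReal < ε := ENNReal.toReal_lt_of_lt_ofReal hn
    have h4 : 0 ≤ d y - d x := sub_nonneg.2 (hmono hxy.le)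
    rw [Real.dist_eq, abs_of_nonneg h4]
    linarith
  set h : StieltjesFunction ℝ := ⟨d, hmono, hrc⟩ with hh
  have hIoc : ∀ a b : ℝ, a ≤ b → ρ (Set.Ioc a b) = ν (Set.Ioc a b) + h.measure (Set.Ioc a b) := by
    intro a b hab
    rw [StieltjesFunction.measure_Ioc]
    rw [show h b - h a = d b - d a from rfl, hincr hab,
      ← ENNReal.toReal_sub_of_le (hle a b) (hρ a b),
      ENNReal.ofReal_toReal (by exact (tsub_le_self.trans_lt (lt_top_iff_ne_top.2 (hρ a b))).ne),
      add_tsub_cancel_of_le (hle a b)]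
  have hext : ρ = ν + h.measure := by
    refine Measure.ext_of_Ioc' ρ (ν + h.measure) (fun a b _ => hρ a b) ?_
    intro a b hab
    rw [hIoc a b hab.le, Measure.add_apply]
  intro s
  rw [hext]
  simp only [Measure.add_apply, Measure.coe_add, Pi.add_apply]
  exact le_self_add

private lemma lint_A {u v : ℝ} (hu : 0 < u) (huv : u ≤ v) :
    ∫⁻ t in Set.Ioc u v, ENNReal.ofReal ((t^2)⁻¹) = ENNReal.ofReal (u⁻¹ - v⁻¹) := by
  have hcont : ContinuousOn (fun t : ℝ => (t^2)⁻¹) (Set.Icc u v) :=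
    (continuousOn_id.pow 2).inv₀ (fun t ht => pow_ne_zero 2 (ne_of_gt (lt_of_lt_of_le hu ht.1)))
  have hint : IntegrableOn (fun t : ℝ => (t^2)⁻¹) (Set.Ioc u v) :=
    (hcont.integrableOn_compact isCompact_Icc).mono_set Set.Ioc_subset_Icc_self
  rw [← ofReal_integral_eq_lintegral_ofReal hint ?_]
  · congr 1
    rw [← intervalIntegral.integral_of_le huv]
    have hderiv : ∀ t ∈ Set.uIcc u v, HasDerivAt (fun t : ℝ => -t⁻¹) ((t^2)⁻¹) t := by
      intro t ht
      rw [Set.uIcc_of_le huv] at ht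
      have ht0 : t ≠ 0 := ne_of_gt (lt_of_lt_of_le hu ht.1)
      have h := (hasDerivAt_inv ht0).neg; rw [neg_neg] at h; exact h
    rw [intervalIntegral.integral_eq_sub_of_hasDerivAt hderiv
      ((hcont.mono (by rw [Set.uIcc_of_le huv])).intervalIntegrable)]
    ring
  · filter_upwards [ae_restrict_mem measurableSet_Ioc] with t ht
    positivity

private lemma lint_B {w v : ℝ} (hw : 0 < w) (hwv : w ≤ v) :
    ∫⁻ t in Set.Ioc w v, ENNReal.ofReal ((t^2)⁻¹ * (t - w)) =
      ENNReal.ofReal (Real.log v - Real.log w - 1 + w/v) := by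
  have hcont : ContinuousOn (fun t : ℝ => (t^2)⁻¹ * (t - w)) (Set.Icc w v) :=
    (((continuousOn_id.pow 2).inv₀
        (fun t ht => pow_ne_zero 2 (ne_of_gt (lt_of_lt_of_le hw ht.1)))).mul
      (continuousOn_id.sub continuousOn_const))
  have hint : IntegrableOn (fun t : ℝ => (t^2)⁻¹ * (t - w)) (Set.Ioc w v) :=
    (hcont.integrableOn_compact isCompact_Icc).mono_set Set.Ioc_subset_Icc_self
  rw [← ofReal_integral_eq_lintegral_ofReal hint ?_]
  · congr 1
    rw [← intervalIntegral.integral_of_le hwv]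
    have hderiv : ∀ t ∈ Set.uIcc w v, HasDerivAt (fun t : ℝ => Real.log t + w * t⁻¹)
        ((t^2)⁻¹ * (t - w)) t := by
      intro t ht
      rw [Set.uIcc_of_le hwv] at ht
      have ht0 : 0 < t := lt_of_lt_of_le hw ht.1
      have h := (Real.hasDerivAt_log ht0.ne').add ((hasDerivAt_inv ht0.ne').const_mul w)
      refine h.congr_deriv ?_
      have ht0' : t ≠ 0 := ht0.ne'
      field_simp
      ring
    rw [intervalIntegral.integral_eq_sub_of_hasDerivAt hderiv
      ((hcont.mono (by rw [Set.uIcc_of_le hwv])).intervalIntegrable)]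
    have hv0 : (0:ℝ) < v := lt_of_lt_of_le hw hwv
    rw [inv_eq_one_div, inv_eq_one_div]
    field_simp
    ring
  · filter_upwards [ae_restrict_mem measurableSet_Ioc] with t ht
    have : 0 ≤ t - w := by linarith [ht.1.le]
    positivity

section KeyLemma
variable (μ : Measure ℝ) [IsFiniteMeasure μ] (F : ℝ → ℝ)

private lemma hμIoc (hF : ∀ x, ENNReal.ofReal (F x) = μ (Set.Ioi x)) (hF0 : ∀ x, 0 ≤ F x)
    {p q : ℝ} (hpq : p ≤ q) : μ (Set.Ioc p q) = ENNReal.ofReal (F p - F q) := by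
  rw [← Set.Ioi_diff_Ioi,
    measure_diff (Set.Ioi_subset_Ioi hpq) measurableSet_Ioi.nullMeasurableSet (measure_ne_top μ _),
    ← hF, ← hF, ENNReal.ofReal_sub _ (hF0 q)]

private lemma complement_bound (hF : ∀ x, ENNReal.ofReal (F x) = μ (Set.Ioi x))
    (hF0 : ∀ x, 0 ≤ F x) {a b t : ℝ} :
    μ ({x | t ≤ F x} ∩ Set.Ioc a b) ≤ ENNReal.ofReal (F a - t) := by
  set A := {x | t ≤ F x} ∩ Set.Ioc a b with hA
  rcases A.eq_empty_or_nonempty with h | h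
  · rw [h]; simp
  · have hbdd : BddAbove A := ⟨b, fun z hz => hz.2.2⟩
    set e := sSup A with he_def
    by_cases he : e ∈ A
    · have hsub : A ⊆ Set.Ioc a e := fun z hz => ⟨hz.2.1, le_csSup hbdd hz⟩
      calc μ A ≤ μ (Set.Ioc a e) := measure_mono hsub
        _ = ENNReal.ofReal (F a - F e) := hμIoc μ F hF hF0 he.2.1.le
        _ ≤ ENNReal.ofReal (F a - t) := by
            have hte : t ≤ F e := he.1
            exact ENNReal.ofReal_le_ofReal (by linarith)
    · obtain ⟨u, hu_mono, hu_tend, hu_mem⟩ := exists_seq_tendsto_sSup h hbdd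
      have hsub : A ⊆ ⋃ n, Set.Ioc a (u n) := by
        intro z hz
        have hz_lt : z < e := lt_of_le_of_ne (le_csSup hbdd hz) (fun hzz => he (hzz ▸ hz))
        obtain ⟨n, hn⟩ := (hu_tend.eventually (eventually_gt_nhds hz_lt)).exists
        exact Set.mem_iUnion.2 ⟨n, hz.2.1, hn.le⟩
      calc μ A ≤ μ (⋃ n, Set.Ioc a (u n)) := measure_mono hsub
        _ = ⨆ n, μ (Set.Ioc a (u n)) := Directed.measure_iUnion
            ((Monotone.directed_le (fun i j hij => Set.Ioc_subset_Ioc_right (hu_mono hij))))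
        _ ≤ ENNReal.ofReal (F a - t) := by
            refine iSup_le fun n => ?_
            rw [hμIoc μ F hF hF0 (hu_mem n).2.1.le]
            have htn : t ≤ F (u n) := (hu_mem n).1
            exact ENNReal.ofReal_le_ofReal (by linarith)

private lemma slice_bound (hF : ∀ x, ENNReal.ofReal (F x) = μ (Set.Ioi x)) (hF0 : ∀ x, 0 ≤ F x)
    {a b t : ℝ} (hab : a ≤ b) (ht : t ∈ Set.Ioc (F b) (F a)) :
    ENNReal.ofReal (t - F b) ≤ μ ({x | F x < t} ∩ Set.Ioc a b) := by
  have hcompl := complement_bound μ F hF hF0 (a := a) (b := b) (t := t)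
  have hcover : μ (Set.Ioc a b) ≤
      μ ({x | F x < t} ∩ Set.Ioc a b) + μ ({x | t ≤ F x} ∩ Set.Ioc a b) := by
    refine le_trans (measure_mono ?_) (measure_union_le _ _)
    intro z hz
    by_cases h : F z < t
    exacts [Or.inl ⟨h, hz⟩, Or.inr ⟨not_lt.1 h, hz⟩]
  have h2 : ENNReal.ofReal (t - F b) =
      ENNReal.ofReal (F a - F b) - ENNReal.ofReal (F a - t) := by
    rw [← ENNReal.ofReal_sub _ (by linarith [ht.2] : (0:ℝ) ≤ F a - t)]
    ring_nf
  rw [h2]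
  refine tsub_le_iff_right.2 ?_
  calc ENNReal.ofReal (F a - F b) = μ (Set.Ioc a b) := (hμIoc μ F hF hF0 hab).symm
    _ ≤ μ ({x | F x < t} ∩ Set.Ioc a b) + μ ({x | t ≤ F x} ∩ Set.Ioc a b) := hcover
    _ ≤ μ ({x | F x < t} ∩ Set.Ioc a b) + ENNReal.ofReal (F a - t) := add_le_add_right hcompl _

private lemma key_Ioc (hF : ∀ x, ENNReal.ofReal (F x) = μ (Set.Ioi x)) (hFpos : ∀ x, 0 < F x)
    {a b : ℝ} (hab : a ≤ b) :
    ENNReal.ofReal (Real.log (F a) - Real.log (F b)) ≤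
      ∫⁻ x in Set.Ioc a b, ENNReal.ofReal (F x)⁻¹ ∂μ := by
  have hF0 : ∀ x, 0 ≤ F x := fun x => (hFpos x).le
  have hFanti : Antitone F := by
    intro x y hxy
    have h := measure_mono (μ := μ) (Set.Ioi_subset_Ioi hxy)
    rw [← hF, ← hF] at h
    exact (ENNReal.ofReal_le_ofReal_iff (hF0 x)).1 h
  have hFmeas : Measurable F := hFanti.measurable
  have hba : F b ≤ F a := hFanti hab
  set φ : ℝ → ℝ → ℝ≥0∞ :=
    fun x t => Set.indicator (Set.Ioi (F x)) (fun s => ENNReal.ofReal ((s^2)⁻¹)) t with hφ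
  have h1b : (0:ℝ) ≤ Real.log (F a) - Real.log (F b) - 1 + F b / F a := by
    have := Real.log_le_sub_one_of_pos (x := F b / F a) (div_pos (hFpos b) (hFpos a))
    rw [Real.log_div (hFpos b).ne' (hFpos a).ne'] at this
    linarith
  have hFaFb : (0:ℝ) ≤ F a - F b := by linarith
  have h1 : ENNReal.ofReal (Real.log (F a) - Real.log (F b)) =
      ENNReal.ofReal (F a)⁻¹ * μ (Set.Ioc a b) +
      ∫⁻ t in Set.Ioc (F b) (F a), ENNReal.ofReal ((t^2)⁻¹ * (t - F b)) := by
    rw [lint_B (hFpos b) hba, hμIoc μ F hF hF0 hab,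
      ← ENNReal.ofReal_mul (inv_nonneg.2 (hF0 a)),
      ← ENNReal.ofReal_add (mul_nonneg (inv_nonneg.2 (hF0 a)) hFaFb) h1b]
    congr 1
    have hFa : F a ≠ 0 := (hFpos a).ne'
    field_simp
    ring
  have h2 : (∫⁻ t in Set.Ioc (F b) (F a), ENNReal.ofReal ((t^2)⁻¹ * (t - F b))) ≤
      ∫⁻ t in Set.Ioc (F b) (F a),
        ENNReal.ofReal ((t^2)⁻¹) * μ ({x | F x < t} ∩ Set.Ioc a b) := by
    refine lintegral_mono_ae ?_
    filter_upwards [ae_restrict_mem measurableSet_Ioc] with t ht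
    rw [ENNReal.ofReal_mul (by positivity : (0:ℝ) ≤ (t^2)⁻¹)]
    exact mul_le_mul_right (slice_bound μ F hF hF0 hab ht) _
  have h3 : ∀ t : ℝ, ENNReal.ofReal ((t^2)⁻¹) * μ ({x | F x < t} ∩ Set.Ioc a b) =
      ∫⁻ x in Set.Ioc a b, φ x t ∂μ := by
    intro t
    have hrw : ∀ x, φ x t = Set.indicator {x | F x < t}
        (fun _ => ENNReal.ofReal ((t^2)⁻¹)) x := by
      intro x; simp [hφ, Set.indicator_apply, Set.mem_Ioi]
    have hset : MeasurableSet {x : ℝ | F x < t} := measurableSet_lt hFmeas measurable_const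
    simp_rw [hrw]
    rw [lintegral_indicator hset, setLIntegral_const, Measure.restrict_apply hset]
  have hswap : (∫⁻ t in Set.Ioc (F b) (F a), ∫⁻ x in Set.Ioc a b, φ x t ∂μ) =
      ∫⁻ x in Set.Ioc a b, ∫⁻ t in Set.Ioc (F b) (F a), φ x t ∂(volume) ∂μ := by
    have hmeas : AEMeasurable (Function.uncurry (fun t x => φ x t))
        ((volume.restrict (Set.Ioc (F b) (F a))).prod (μ.restrict (Set.Ioc a b))) := by
      have : (Function.uncurry (fun t x => φ x t)) =
          Set.indicator {p : ℝ × ℝ | F p.2 < p.1} (fun p => ENNReal.ofReal ((p.1^2)⁻¹)) := by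
        funext p
        simp [Function.uncurry, hφ, Set.indicator_apply, Set.mem_Ioi]
      rw [this]
      exact (((measurable_fst.pow_const 2).inv.ennreal_ofReal).indicator
        (measurableSet_lt (hFmeas.comp measurable_snd) measurable_fst)).aemeasurable
    exact lintegral_lintegral_swap hmeas
  have h5 : ∀ x ∈ Set.Ioc a b, (∫⁻ t in Set.Ioc (F b) (F a), φ x t ∂(volume)) =
      ENNReal.ofReal ((F x)⁻¹ - (F a)⁻¹) := by
    intro x hx
    have hx1 : F x ≤ F a := hFanti hx.1.le
    have hx2 : F b ≤ F x := hFanti hx.2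
    rw [hφ]
    rw [lintegral_indicator measurableSet_Ioi, Measure.restrict_restrict measurableSet_Ioi]
    have : Set.Ioi (F x) ∩ Set.Ioc (F b) (F a) = Set.Ioc (F x) (F a) := by
      ext t
      simp only [Set.mem_inter_iff, Set.mem_Ioi, Set.mem_Ioc]
      constructor
      · rintro ⟨ha1, _, ha3⟩; exact ⟨ha1, ha3⟩
      · rintro ⟨ha1, ha3⟩; exact ⟨ha1, lt_of_le_of_lt hx2 ha1, ha3⟩
    rw [this, lint_A (hFpos x) hx1]
  calc ENNReal.ofReal (Real.log (F a) - Real.log (F b))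
      = ENNReal.ofReal (F a)⁻¹ * μ (Set.Ioc a b) +
        ∫⁻ t in Set.Ioc (F b) (F a), ENNReal.ofReal ((t^2)⁻¹ * (t - F b)) := h1
    _ ≤ ENNReal.ofReal (F a)⁻¹ * μ (Set.Ioc a b) +
        ∫⁻ t in Set.Ioc (F b) (F a),
          ENNReal.ofReal ((t^2)⁻¹) * μ ({x | F x < t} ∩ Set.Ioc a b) := add_le_add_right h2 _
    _ = ENNReal.ofReal (F a)⁻¹ * μ (Set.Ioc a b) +
        ∫⁻ x in Set.Ioc a b, ENNReal.ofReal ((F x)⁻¹ - (F a)⁻¹) ∂μ := by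
        congr 1
        rw [lintegral_congr h3, hswap]
        refine lintegral_congr_ae ?_
        filter_upwards [ae_restrict_mem measurableSet_Ioc] with x hx
        exact h5 x hx
    _ ≤ ∫⁻ x in Set.Ioc a b, ENNReal.ofReal (F x)⁻¹ ∂μ := by
        rw [show ENNReal.ofReal (F a)⁻¹ * μ (Set.Ioc a b) =
            ∫⁻ _x in Set.Ioc a b, ENNReal.ofReal (F a)⁻¹ ∂μ from (setLIntegral_const _ _).symm,
          ← lintegral_add_left measurable_const]
        refine lintegral_mono_ae ?_
        filter_upwards [ae_restrict_mem measurableSet_Ioc] with x hx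
        have hx1 : F x ≤ F a := hFanti hx.1.le
        have hinv : (F a)⁻¹ ≤ (F x)⁻¹ := inv_anti₀ (hFpos x) hx1
        rw [← ENNReal.ofReal_add (inv_nonneg.2 (hF0 a)) (by linarith)]
        exact ENNReal.ofReal_le_ofReal (by linarith)

end KeyLemma

end Aux

/-- For independent nonnegative `X, Y` with log-tail functions
`g₀(x) = -log P(X>x)`, `g₁(x) = -log P(Y>x)`, `g = (g₀+g₁)/2`, and
`L⁰_{m,d} = {ℓ ∈ [0,2m] : (g₀(ℓ)+g₁(2m-ℓ))/2 ≤ g(m)+d}`, one has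
`P(X+Y > 2m) ≥ e^{-2d} ⬝ P(X>m) ⬝ P(Y>m) ⬝ |L⁰_{m,d}|_{g₀}`. -/
theorem stmt_13 {Ω : Type*} [MeasurableSpace Ω] (P : Measure Ω) [IsProbabilityMeasure P]
    (X Y : Ω → ℝ) (hXm : Measurable X) (hYm : Measurable Y)
    (hXY : IndepFun X Y P)
    (hX0 : ∀ ω, 0 ≤ X ω) (hY0 : ∀ ω, 0 ≤ Y ω)
    (hXu : ∀ m : ℝ, 0 < P {ω | X ω > m}) (hYu : ∀ m : ℝ, 0 < P {ω | Y ω > m})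
    (g₀ : StieltjesFunction ℝ) (g₁ : ℝ → ℝ)
    (hg₀ : ∀ x : ℝ, g₀ x = -Real.log (P {ω | X ω > x}).toReal)
    (hg₁ : ∀ x : ℝ, g₁ x = -Real.log (P {ω | Y ω > x}).toReal)
    (m d : ℝ) (hm : 0 ≤ m) (hd : 0 ≤ d) :
    P {ω | X ω + Y ω > 2 * m} ≥
      ENNReal.ofReal (Real.exp (-(2 * d))) * P {ω | X ω > m} * P {ω | Y ω > m} *
        g₀.measure {ℓ : ℝ | ℓ ∈ Set.Icc 0 (2 * m) ∧
          (g₀ ℓ + g₁ (2 * m - ℓ)) / 2 ≤ (g₀ m + g₁ m) / 2 + d} := by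
  classical
  set F₀ : ℝ → ℝ := fun x => (P {ω | X ω > x}).toReal with hF₀def
  set F₁ : ℝ → ℝ := fun x => (P {ω | Y ω > x}).toReal with hF₁def
  set μ : Measure ℝ := P.map X with hμdef
  set ν : Measure ℝ := P.map Y with hνdef
  haveI hμprob : IsProbabilityMeasure μ := Measure.isProbabilityMeasure_map hXm.aemeasurable
  haveI hνprob : IsProbabilityMeasure ν := Measure.isProbabilityMeasure_map hYm.aemeasurable
  have hμIoi : ∀ x : ℝ, μ (Set.Ioi x) = P {ω | X ω > x} := by
    intro x
    rw [hμdef, Measure.map_apply hXm measurableSet_Ioi]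
    rfl
  have hνIoi : ∀ x : ℝ, ν (Set.Ioi x) = P {ω | Y ω > x} := by
    intro x
    rw [hνdef, Measure.map_apply hYm measurableSet_Ioi]
    rfl
  have hF₀spec : ∀ x, ENNReal.ofReal (F₀ x) = μ (Set.Ioi x) := by
    intro x; rw [hμIoi]; exact ENNReal.ofReal_toReal (measure_ne_top P _)
  have hF₁spec : ∀ x, ENNReal.ofReal (F₁ x) = ν (Set.Ioi x) := by
    intro x; rw [hνIoi]; exact ENNReal.ofReal_toReal (measure_ne_top P _)
  have hF₀pos : ∀ x, 0 < F₀ x := fun x => ENNReal.toReal_pos (hXu x).ne' (measure_ne_top P _)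
  have hF₁pos : ∀ x, 0 < F₁ x := fun x => ENNReal.toReal_pos (hYu x).ne' (measure_ne_top P _)
  have hg₀F : ∀ x, Real.exp (-(g₀ x)) = F₀ x := by
    intro x; rw [hg₀ x, neg_neg]; exact Real.exp_log (hF₀pos x)
  have hg₁F : ∀ x, Real.exp (-(g₁ x)) = F₁ x := by
    intro x; rw [hg₁ x, neg_neg]; exact Real.exp_log (hF₁pos x)
  have hF₀anti : Antitone F₀ := by
    intro x y hxy
    have h := measure_mono (μ := μ) (Set.Ioi_subset_Ioi hxy)
    rw [← hF₀spec, ← hF₀spec] at h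
    exact (ENNReal.ofReal_le_ofReal_iff (hF₀pos x).le).1 h
  have hF₁anti : Antitone F₁ := by
    intro x y hxy
    have h := measure_mono (μ := ν) (Set.Ioi_subset_Ioi hxy)
    rw [← hF₁spec, ← hF₁spec] at h
    exact (ENNReal.ofReal_le_ofReal_iff (hF₁pos x).le).1 h
  -- the density measure
  set ρ : Measure ℝ := μ.withDensity (fun x => ENNReal.ofReal (F₀ x)⁻¹) with hρdef
  have hρmeas : Measurable (fun x => ENNReal.ofReal (F₀ x)⁻¹) :=
    (hF₀anti.measurable.inv).ennreal_ofReal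
  have hρIoc : ∀ a b : ℝ, ρ (Set.Ioc a b) = ∫⁻ x in Set.Ioc a b, ENNReal.ofReal (F₀ x)⁻¹ ∂μ :=
    fun a b => withDensity_apply _ measurableSet_Ioc
  have hρIoc_ne : ∀ a b : ℝ, ρ (Set.Ioc a b) ≠ ⊤ := by
    intro a b
    rw [hρIoc]
    have hle : (∫⁻ x in Set.Ioc a b, ENNReal.ofReal (F₀ x)⁻¹ ∂μ) ≤
        ENNReal.ofReal (F₀ b)⁻¹ * μ (Set.Ioc a b) := by
      rw [← setLIntegral_const]
      refine lintegral_mono_ae ?_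
      filter_upwards [ae_restrict_mem measurableSet_Ioc] with x hx
      exact ENNReal.ofReal_le_ofReal (inv_anti₀ (hF₀pos b) (hF₀anti hx.2))
    refine (lt_of_le_of_lt hle ?_).ne
    exact ENNReal.mul_lt_top ENNReal.ofReal_lt_top (measure_lt_top μ _)
  have hdom : g₀.measure ≤ ρ := by
    refine measure_le_of_forall_Ioc_le (fun a b => ?_) hρIoc_ne (fun a b => ?_)
    · rw [g₀.measure_Ioc]; exact ENNReal.ofReal_ne_top
    · rcases le_or_gt a b with hab | hab
      · rw [g₀.measure_Ioc, hρIoc]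
        have hgg : g₀ b - g₀ a = Real.log (F₀ a) - Real.log (F₀ b) := by
          rw [hg₀ a, hg₀ b]; ring
        rw [hgg]
        exact key_Ioc μ F₀ hF₀spec hF₀pos hab
      · rw [Set.Ioc_eq_empty (not_lt.2 hab.le)]
        simp
  -- the set L
  set L := {ℓ : ℝ | ℓ ∈ Set.Icc 0 (2 * m) ∧
      (g₀ ℓ + g₁ (2 * m - ℓ)) / 2 ≤ (g₀ m + g₁ m) / 2 + d} with hLdef
  have hg₀meas : Measurable (g₀ : ℝ → ℝ) := g₀.mono.measurable
  have hg₁meas : Measurable g₁ := by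
    have hrw : g₁ = fun x => -Real.log (F₁ x) := by funext x; exact hg₁ x
    rw [hrw]
    exact (Real.measurable_log.comp hF₁anti.measurable).neg
  have hLmeas : MeasurableSet L := by
    have : L = Set.Icc 0 (2 * m) ∩
        {ℓ : ℝ | (g₀ ℓ + g₁ (2 * m - ℓ)) / 2 ≤ (g₀ m + g₁ m) / 2 + d} := rfl
    rw [this]
    refine measurableSet_Icc.inter (measurableSet_le ?_ measurable_const)
    exact ((hg₀meas.add (hg₁meas.comp (measurable_const.sub measurable_id))).div_const 2)
  -- Step A : independence and product structure
  have hprod : P.map (fun ω => (X ω, Y ω)) = μ.prod ν :=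
    (ProbabilityTheory.indepFun_iff_map_prod_eq_prod_map_map hXm.aemeasurable
      hYm.aemeasurable).1 hXY
  have hSmeas : MeasurableSet {p : ℝ × ℝ | p.1 + p.2 > 2 * m} :=
    measurableSet_lt measurable_const (measurable_fst.add measurable_snd)
  have hA : P {ω | X ω + Y ω > 2 * m} = ∫⁻ x, ν (Set.Ioi (2 * m - x)) ∂μ := by
    have h1 : P {ω | X ω + Y ω > 2 * m} =
        (P.map (fun ω => (X ω, Y ω))) {p : ℝ × ℝ | p.1 + p.2 > 2 * m} := by
      rw [Measure.map_apply (hXm.prodMk hYm) hSmeas]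
      rfl
    rw [h1, hprod, Measure.prod_apply hSmeas]
    refine lintegral_congr fun x => ?_
    congr 1
    ext y
    simp only [Set.mem_preimage, Set.mem_setOf_eq, Set.mem_Ioi]
    constructor
    · intro h; linarith
    · intro h; linarith
  -- the main chain
  rw [ge_iff_le, hA]
  have hCrw : ENNReal.ofReal (Real.exp (-(2 * d))) * P {ω | X ω > m} * P {ω | Y ω > m} =
      ENNReal.ofReal (Real.exp (-(2 * d)) * (F₀ m * F₁ m)) := by
    rw [ENNReal.ofReal_mul (Real.exp_nonneg _), ENNReal.ofReal_mul (hF₀pos m).le,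
      hF₀spec, hF₁spec, hμIoi, hνIoi, mul_assoc]
  rw [hCrw]
  set C : ENNReal := ENNReal.ofReal (Real.exp (-(2 * d)) * (F₀ m * F₁ m)) with hCdef
  calc C * g₀.measure L ≤ C * ρ L := mul_le_mul_right (hdom L) C
    _ = ∫⁻ x in L, C * ENNReal.ofReal (F₀ x)⁻¹ ∂μ := by
        rw [hρdef, withDensity_apply _ hLmeas, lintegral_const_mul _ hρmeas]
    _ ≤ ∫⁻ x in L, ν (Set.Ioi (2 * m - x)) ∂μ := by
        refine lintegral_mono_ae ?_
        filter_upwards [ae_restrict_mem hLmeas] with x hx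
        have hcond : (g₀ x + g₁ (2 * m - x)) / 2 ≤ (g₀ m + g₁ m) / 2 + d := hx.2
        have hineq : Real.exp (-(2 * d)) * (F₀ m * F₁ m) ≤ F₁ (2 * m - x) * F₀ x := by
          rw [← hg₀F, ← hg₁F, ← hg₀F, ← hg₁F, ← Real.exp_add, ← Real.exp_add,
            ← Real.exp_add]
          exact Real.exp_le_exp.2 (by linarith)
        rw [← hF₁spec, hCdef, ← ENNReal.ofReal_mul (by positivity)]
        refine ENNReal.ofReal_le_ofReal ?_
        rw [← div_eq_mul_inv, div_le_iff₀ (hF₀pos x)]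
        exact hineq
    _ ≤ ∫⁻ x, ν (Set.Ioi (2 * m - x)) ∂μ :=
        lintegral_mono' Measure.restrict_le_self le_rfl
end

section
/- Let h be affine on an interval I, let g : [0,∞) → [0,∞) be nondecreasing with g ≥ h on [0,∞), and let m ∈ I attain the maximum of g - h on I. If x₁,…,xₙ ∈ I satisfy Σⱼ λⱼxⱼ = m and (1/n)Σⱼ xⱼ ≤ m, then Σ_{j=1}^n g(xⱼ) ≤ n·g(m); i.e., (x₁,…,x_{n-1}) ∈ L^g_{m,0,λ̄}. -/
/-- **Observation: affine pieces.** Let `h` be a nondecreasing convex minorant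
of `g` which is affine on the interval `I = [a,b] ⊆ [0,∞)`, let `g` be nondecreasing with
`h ≤ g`, and let `m ∈ I` attain the maximum of `g - h` on `I`.  If `x₀,…,xₙ ∈ I` satisfy
`Σⱼ λⱼ xⱼ = m` and `(1/(n+1)) Σⱼ xⱼ ≤ m`, then `Σⱼ g(xⱼ) ≤ (n+1) g(m)`
(i.e. `(x₀,…,x_{n-1}) ∈ L^g_{m,0,λ̄}`). -/
theorem stmt_16 (n : ℕ) (g h : ℝ → ℝ)
    (hg_mono : MonotoneOn g (Set.Ici 0)) (hg_nonneg : ∀ x ∈ Set.Ici (0:ℝ), 0 ≤ g x)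
    (hh_conv : ConvexOn ℝ (Set.Ici 0) h) (hh_mono : MonotoneOn h (Set.Ici 0))
    (hh_le : ∀ x ∈ Set.Ici (0:ℝ), h x ≤ g x)
    (a b : ℝ) (ha : 0 ≤ a) (hab : a ≤ b)
    (α β : ℝ) (haff : ∀ x ∈ Set.Icc a b, h x = α * x + β)
    (m : ℝ) (hmI : m ∈ Set.Icc a b)
    (hmax : ∀ x ∈ Set.Icc a b, g x - h x ≤ g m - h m)
    (lam : Fin (n + 1) → ℝ) (hlam : ∀ j, lam j ∈ Set.Ioo (0:ℝ) 1) (hsum : ∑ j, lam j = 1)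
    (x : Fin (n + 1) → ℝ) (hx : ∀ j, x j ∈ Set.Icc a b)
    (hwsum : ∑ j, lam j * x j = m)
    (havg : (∑ j, x j) / (n + 1) ≤ m) :
    ∑ j, g (x j) ≤ (n + 1) * g m := by
  have hhm : h m = α * m + β := haff m hmI
  have key : ∀ j, g (x j) ≤ α * x j + (β + (g m - h m)) := by
    intro j
    have h1 := hmax (x j) (hx j)
    have h2 := haff (x j) (hx j)
    linarith
  have hsum1 : ∑ j, g (x j) ≤ ∑ j, (α * x j + (β + (g m - h m))) :=
    Finset.sum_le_sum fun j _ => key j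
  have hsum2 : ∑ j, (α * x j + (β + (g m - h m)))
      = α * (∑ j, x j) + ((n:ℝ)+1) * (β + (g m - h m)) := by
    rw [Finset.sum_add_distrib, Finset.sum_const, Finset.card_univ, Fintype.card_fin,
      ← Finset.mul_sum]
    push_cast; ring
  have hxs : ∑ j, x j ≤ ((n:ℝ)+1) * m := by
    have hpos : (0:ℝ) < (n:ℝ) + 1 := by positivity
    rw [div_le_iff₀ hpos] at havg
    linarith
  have hterm : α * (∑ j, x j) ≤ α * (((n:ℝ)+1) * m) := by
    rcases eq_or_lt_of_le hab with heq | hlt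
    · have hxm : ∀ j, x j = m := by
        intro j
        have h1 := hx j
        have h2 := hmI
        rw [← heq] at h1 h2
        have : x j = a := le_antisymm h1.2 h1.1
        have : m = a := le_antisymm h2.2 h2.1
        linarith
      have : ∑ j, x j = ((n:ℝ)+1) * m := by
        simp only [hxm, Finset.sum_const, Finset.card_univ, Fintype.card_fin, nsmul_eq_mul]
        push_cast; ring
      rw [this]
    · have hα : 0 ≤ α := by
        have hha := haff a ⟨le_refl a, hab⟩
        have hhb := haff b ⟨hab, le_refl b⟩
        have := hh_mono (Set.mem_Ici.2 ha) (Set.mem_Ici.2 (ha.trans hab)) hab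
        nlinarith
      exact mul_le_mul_of_nonneg_left hxs hα
  calc ∑ j, g (x j) ≤ α * (∑ j, x j) + ((n:ℝ)+1) * (β + (g m - h m)) := by
        rw [← hsum2]; exact hsum1
    _ ≤ α * (((n:ℝ)+1) * m) + ((n:ℝ)+1) * (β + (g m - h m)) := by linarith
    _ = ((n:ℝ) + 1) * g m := by rw [hhm] at *; ring
end
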